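/- arXiv:1611.08419 — 3 statements merged into one kernel-verified Lean document; each statement's English description precedes it below -/
import Mathlib

section
/- For all infinite cycles A and B and all n, every vertex m of the pedigree graph G_n^{AB} has at most 2 neighbors k with k < m (at most 2 edges to vertices created in the past). -/
open MeasureTheory

/-- An infinite cycle: coordinate `i` represents the choice `c_{i+3} ∈ {1,…,i+3}`
(encoded as `Fin (i+3)`, with value `v` representing `v+1`). -/
abbrev InfCycle := ∀ i : ℕ, Fin (i + 3)

/-- The list of nodes of the cycle `A_n`, in positive direction starting at node 1.
`A_{n+1}` arises from `A_n` by inserting node `n+1` into the `c_n`-th edge. -/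
def listOf (c : InfCycle) : ℕ → List ℕ
  | 0 => []
  | 1 => []
  | 2 => []
  | 3 => [1, 2, 3]
  | (n + 4) => (listOf c (n + 3)).insertIdx ((c n).val + 1) (n + 4)

/-- The node following `x` in the cyclic order given by the list `l`. -/
def cyclicNext (l : List ℕ) (x : ℕ) : ℕ := (l.rotate 1).getD (l.idxOf x) 0

/-- The node preceding `x` in the cyclic order given by the list `l`. -/
def cyclicPrev (l : List ℕ) (x : ℕ) : ℕ := (l.rotate (l.length - 1)).getD (l.idxOf x) 0

/-- `ν⁺_A(k)`: the neighbor of `k` in `A_k` in positive direction. -/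
def nuPlus (c : InfCycle) (k : ℕ) : ℕ :=
  if k ≤ 1 then 0 else if k = 2 then 1 else cyclicNext (listOf c k) k

/-- `ν⁻_A(k)`: the neighbor of `k` in `A_k` in negative direction. -/
def nuMinus (c : InfCycle) (k : ℕ) : ℕ :=
  if k ≤ 1 then 0 else if k = 2 then 1 else cyclicPrev (listOf c k) k

/-- `ν_A(k) = {ν⁺_A(k), ν⁻_A(k)}`, the edge of `A_{k-1}` into which `k` was inserted. -/
def nuSet (c : InfCycle) (k : ℕ) : Finset ℕ := {nuPlus c k, nuMinus c k}

/-- The edges (as unordered pairs) of the cycle whose nodes, in cyclic order, are `l`. -/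
def edgeList (l : List ℕ) : List (Finset ℕ) :=
  l.zipWith (fun x y => ({x, y} : Finset ℕ)) (l.rotate 1)

/-- `E(A_n)`: the edge set of the cycle `A_n`. -/
def cycleEdges (c : InfCycle) (n : ℕ) : Finset (Finset ℕ) := (edgeList (listOf c n)).toFinset

/-- `k` is a vertex of the pedigree graph `G_n^{AB}`. -/
def isVertex (a b : InfCycle) (n k : ℕ) : Prop := 4 ≤ k ∧ k ≤ n ∧ nuSet a k ≠ nuSet b k

/-- The condition for an edge of the pedigree graph between vertices `k < m`
(type-1 A→B, type-1 B→A, type-2 A→B, type-2 B→A). -/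
def edgeCond (a b : InfCycle) (k m : ℕ) : Prop :=
  nuSet a m = nuSet b k ∨ nuSet b m = nuSet a k ∨
  (k = max (nuPlus a m) (nuMinus a m) ∧ nuSet b k ∩ nuSet a m = ∅) ∨
  (k = max (nuPlus b m) (nuMinus b m) ∧ nuSet a k ∩ nuSet b m = ∅)

/-- The pedigree graph `G_n^{AB}`, as a graph on `ℕ` (non-vertices are isolated). -/
def pedigreeGraph (a b : InfCycle) (n : ℕ) : SimpleGraph ℕ where
  Adj k m := isVertex a b n k ∧ isVertex a b n m ∧
    ((k < m ∧ edgeCond a b k m) ∨ (m < k ∧ edgeCond a b m k))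
  symm := ⟨fun k m ⟨h1, h2, h3⟩ => ⟨h2, h1, h3.symm⟩⟩
  loopless := ⟨fun k h => by rcases h.2.2 with ⟨h', _⟩ | ⟨h', _⟩ <;> exact absurd h' (lt_irrefl k)⟩

/-- The vertex set of the pedigree graph `G_n^{AB}`. -/
def vertexSet (a b : InfCycle) (n : ℕ) : Set ℕ := {k | isVertex a b n k}

/-- The pedigree graph `G_n^{AB}` on its vertex set. -/
def pGraph (a b : InfCycle) (n : ℕ) : SimpleGraph (vertexSet a b n) :=
  (pedigreeGraph a b n).induce (vertexSet a b n)

/-- The pedigree graph `G_n^{AB}` is connected. -/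
def pConnected (a b : InfCycle) (n : ℕ) : Prop := (pGraph a b n).Connected

/-- `T_n`: the number of connected components of the pedigree graph `G_n^{AB}`. -/
noncomputable def Tnum (a b : InfCycle) (n : ℕ) : ℕ :=
  Nat.card (pGraph a b n).ConnectedComponent

/-- `I_n`: at time `n`, the node `n` is added to the pedigree graph as an isolated vertex. -/
def isolatedAt (a b : InfCycle) (n : ℕ) : Prop :=
  isVertex a b n n ∧ ∀ k, ¬ (pedigreeGraph a b n).Adj n k

/-- The event that the first `m` coordinates (`c_3, …, c_{m+2}`) agree with those of `b₀`. -/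
def prefixEvent (b₀ : InfCycle) (m : ℕ) : Set InfCycle := {b | ∀ j, j < m → b j = b₀ j}

/-- `μ` is the distribution of a random infinite cycle: the product over `n ≥ 3` of the
uniform measures on `{1,…,n}`.  (This property determines `μ` uniquely.) -/
def IsCycleMeasure (μ : Measure InfCycle) : Prop :=
  IsProbabilityMeasure μ ∧
    ∀ (b₀ : InfCycle) (m : ℕ),
      μ (prefixEvent b₀ m) = ∏ j ∈ Finset.range m, ((j + 3 : ℕ) : ENNReal)⁻¹

/-- An Alice strategy: her choice at each time depends only on Bob's earlier choices. -/
structure AliceStrategy where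
  play : InfCycle → InfCycle
  adapted : ∀ (b b' : InfCycle) (i : ℕ), (∀ j, j < i → b j = b' j) → play b i = play b' i

/-- `S_n = |E(A_n) ∩ E(B_n)|`. -/
def Sval (a b : InfCycle) (n : ℕ) : ℕ := (cycleEdges a n ∩ cycleEdges b n).card

/-- `S*_n`: the number of common edges not incident on `ν_A(n+1)`. -/
def Sstar (a b : InfCycle) (n : ℕ) : ℕ :=
  ((cycleEdges a n ∩ cycleEdges b n).filter (fun e => e ∩ nuSet a (n + 1) = ∅)).card

/-- `R_n`: the number of edges of `B_n` that are not common and not incident on `ν_A(n+1)`. -/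
def Rval (a b : InfCycle) (n : ℕ) : ℕ :=
  ((cycleEdges b n \ cycleEdges a n).filter (fun e => e ∩ nuSet a (n + 1) = ∅)).card

/-- Alice's move at time `m` is a d-move: `ν_A(m) ∉ E^∩_{m-1}`. -/
def dMoveAt (a b : InfCycle) (m : ℕ) : Prop := nuSet a m ∉ cycleEdges b (m - 1)

/-- `Y`: the total number of times an isolated vertex is created in the pedigree graph. -/
noncomputable def Yval (a b : InfCycle) : ENNReal :=
  ∑' m : ℕ, Set.indicator {x : ℕ | isolatedAt a b x} (fun _ => 1) m

namespace PedigreeAux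

/-- Safe indexed access into a list of naturals. -/
def nth (l : List ℕ) (i : ℕ) : ℕ := l.getD i 0

/-- The edges of the cycle given by `l`, as an indexed predicate. -/
def E (l : List ℕ) (e : Finset ℕ) : Prop :=
  ∃ i < l.length, e = ({nth l i, nth l ((i + 1) % l.length)} : Finset ℕ)

lemma pair_eq {a b c d : ℕ} (h : ({a, b} : Finset ℕ) = {c, d}) :
    (a = c ∧ b = d) ∨ (a = d ∧ b = c) := by
  simp only [Finset.ext_iff, Finset.mem_insert, Finset.mem_singleton] at h
  have h1 := h a; have h2 := h b; have h3 := h c; have h4 := h d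
  omega

lemma mem_pair {x a b : ℕ} : x ∈ ({a, b} : Finset ℕ) ↔ x = a ∨ x = b := by simp

lemma nth_lt {l : List ℕ} {i : ℕ} (h : i < l.length) : nth l i = l[i] :=
  List.getD_eq_getElem _ _ h

lemma nth_mem {l : List ℕ} {i : ℕ} (h : i < l.length) : nth l i ∈ l := by
  rw [nth_lt h]; exact List.getElem_mem _

lemma nth_inj {l : List ℕ} (hnd : l.Nodup) {i j : ℕ} (hi : i < l.length) (hj : j < l.length)
    (h : nth l i = nth l j) : i = j := by
  rw [nth_lt hi, nth_lt hj] at h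
  exact hnd.getElem_inj_iff.mp h

lemma nth_rotate {l : List ℕ} (nrot : ℕ) {i : ℕ} (h : i < l.length) :
    nth (l.rotate nrot) i = nth l ((i + nrot) % l.length) := by
  have h1 : i < (l.rotate nrot).length := by rw [List.length_rotate]; exact h
  have h2 : (i + nrot) % l.length < l.length := Nat.mod_lt _ (by omega)
  rw [nth_lt h1, List.getElem_rotate, nth_lt h2]

lemma length_edgeList (l : List ℕ) : (edgeList l).length = l.length := by
  simp [edgeList]

lemma edgeList_getElem {l : List ℕ} {i : ℕ} (hi : i < l.length)
    (hi' : i < (edgeList l).length) :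
    (edgeList l)[i] = ({nth l i, nth l ((i + 1) % l.length)} : Finset ℕ) := by
  have hmod : (i + 1) % l.length < l.length := Nat.mod_lt _ (by omega)
  show (List.zipWith (fun x y => ({x, y} : Finset ℕ)) l (l.rotate 1))[i]'(by simpa using hi) = _
  rw [List.getElem_zipWith, List.getElem_rotate, nth_lt hi, nth_lt hmod]

lemma mem_cycleEdges_iff {l : List ℕ} (hl : l.length ≠ 0) {e : Finset ℕ} :
    e ∈ (edgeList l).toFinset ↔ E l e := by
  rw [List.mem_toFinset, List.mem_iff_getElem]
  constructor
  · rintro ⟨i, hi, rfl⟩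
    have hi2 : i < l.length := by rwa [length_edgeList] at hi
    exact ⟨i, hi2, edgeList_getElem hi2 hi⟩
  · rintro ⟨i, hi, rfl⟩
    exact ⟨i, by rwa [length_edgeList], edgeList_getElem hi (by rwa [length_edgeList])⟩

section Step

variable {l : List ℕ} {p v : ℕ}

lemma nth_insert_lt (hpL : p ≤ l.length) {j : ℕ} (hj : j < p) :
    nth (l.insertIdx p v) j = nth l j := by
  have hjL : j < l.length := lt_of_lt_of_le hj hpL
  have hjL' : j < (l.insertIdx p v).length := by
    rw [List.length_insertIdx_of_le_length hpL _]; omega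
  rw [nth_lt hjL', nth_lt hjL]
  exact List.getElem_insertIdx_of_lt hj hjL'

lemma nth_insert_self (hpL : p ≤ l.length) : nth (l.insertIdx p v) p = v := by
  have hp' : p < (l.insertIdx p v).length := by
    rw [List.length_insertIdx_of_le_length hpL _]; omega
  rw [nth_lt hp']
  exact List.getElem_insertIdx_self hp'

lemma nth_insert_gt (hpL : p ≤ l.length) {j : ℕ} (h1 : p < j) (h2 : j ≤ l.length) :
    nth (l.insertIdx p v) j = nth l (j - 1) := by
  have hj1 : j - 1 < l.length := by omega
  have hj' : j < (l.insertIdx p v).length := by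
    rw [List.length_insertIdx_of_le_length hpL _]; omega
  rw [nth_lt hj', nth_lt hj1]
  have hpk : p + (j - 1 - p) = j - 1 := by omega
  have key : (l.insertIdx p v)[p + (j - 1 - p) + 1]'(by omega) = l[p + (j - 1 - p)]'(by omega) :=
    List.getElem_insertIdx_add_succ l v p (j - 1 - p) (by omega)
  have hidx : p + (j - 1 - p) + 1 = j := by omega
  simp only [hpk] at key
  rw [← key]
  congr 1
  omega

lemma step_edge_cases (hnd : l.Nodup) (h3 : 3 ≤ l.length) (hp1 : 1 ≤ p) (hpL : p ≤ l.length)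
    (hv : v ∉ l) {e : Finset ℕ} (he : E (l.insertIdx p v) e) :
    e = {nth l (p - 1), v} ∨ e = {v, nth l (p % l.length)} ∨
      (∃ i < l.length, i ≠ p - 1 ∧ e = {nth l i, nth l ((i + 1) % l.length)}) := by
  obtain ⟨i, hi, rfl⟩ := he
  set L := l.length with hL
  rw [List.length_insertIdx_of_le_length hpL _] at hi
  have hlen : (l.insertIdx p v).length = L + 1 := List.length_insertIdx_of_le_length hpL _
  rw [hlen]
  by_cases hip : i = p
  · -- edge {v, next}
    right; left
    have h1 : nth (l.insertIdx p v) i = v := by rw [hip]; exact nth_insert_self hpL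
    have h2 : nth (l.insertIdx p v) ((i + 1) % (L + 1)) = nth l (p % L) := by
      by_cases hpe : p = L
      · have hq : (i + 1) % (L + 1) = 0 := by rw [hip, hpe]; simp
        have hq2 : p % L = 0 := by rw [hpe]; simp
        rw [hq, hq2]
        exact nth_insert_lt hpL (by omega)
      · have hq : (i + 1) % (L + 1) = p + 1 := by
          rw [hip]; exact Nat.mod_eq_of_lt (by omega)
        have hq2 : p % L = p := Nat.mod_eq_of_lt (by omega)
        rw [hq, hq2, nth_insert_gt hpL (by omega) (by omega)]
        congr 1
    rw [h1, h2]
  · by_cases hip1 : i + 1 = p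
    · -- edge {prev, v}
      left
      have hq : (i + 1) % (L + 1) = p := by rw [hip1]; exact Nat.mod_eq_of_lt (by omega)
      have h1 : nth (l.insertIdx p v) i = nth l (p - 1) := by
        rw [nth_insert_lt hpL (by omega)]; congr 1; omega
      have h2 : nth (l.insertIdx p v) ((i + 1) % (L + 1)) = v := by
        rw [hq]; exact nth_insert_self hpL
      rw [h1, h2]
    · -- old edge
      right; right
      by_cases hiL : i = L
      · -- wrap-around edge; here p < L
        have hpltL : p < L := by omega
        have hq : (i + 1) % (L + 1) = 0 := by rw [hiL]; simp
        have h1 : nth (l.insertIdx p v) i = nth l (L - 1) := by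
          rw [hiL, nth_insert_gt hpL (by omega) (by omega)]
        have h2 : nth (l.insertIdx p v) ((i + 1) % (L + 1)) = nth l 0 := by
          rw [hq]; exact nth_insert_lt hpL (by omega)
        refine ⟨L - 1, by omega, by omega, ?_⟩
        rw [h1, h2]
        have hz : (L - 1 + 1) % L = 0 := by
          have : L - 1 + 1 = L := by omega
          rw [this]; simp
        rw [hz]
      · have hiL' : i < L := by omega
        have hq : (i + 1) % (L + 1) = i + 1 := Nat.mod_eq_of_lt (by omega)
        rw [hq]
        by_cases hilt : i < p
        · -- i + 1 < p
          have hi1p : i + 1 < p := by omega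
          refine ⟨i, by omega, by omega, ?_⟩
          have h1 : nth (l.insertIdx p v) i = nth l i := nth_insert_lt hpL (by omega)
          have h2 : nth (l.insertIdx p v) (i + 1) = nth l (i + 1) :=
            nth_insert_lt hpL (by omega)
          have hm : (i + 1) % L = i + 1 := Nat.mod_eq_of_lt (by omega)
          rw [h1, h2, hm]
        · -- p < i < L
          have hpi : p < i := by omega
          refine ⟨i - 1, by omega, by omega, ?_⟩
          have h1 : nth (l.insertIdx p v) i = nth l (i - 1) :=
            nth_insert_gt hpL (by omega) (by omega)
          have h2 : nth (l.insertIdx p v) (i + 1) = nth l i :=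
            nth_insert_gt hpL (by omega) (by omega)
          have hm : (i - 1 + 1) % L = i := by
            have : i - 1 + 1 = i := by omega
            rw [this]; exact Nat.mod_eq_of_lt (by omega)
          rw [h1, h2, hm]

lemma step_edge_old (hnd : l.Nodup) (h3 : 3 ≤ l.length) (hp1 : 1 ≤ p) (hpL : p ≤ l.length)
    (hv : v ∉ l) {e : Finset ℕ} (he : E (l.insertIdx p v) e) (hve : v ∉ e) : E l e := by
  rcases step_edge_cases hnd h3 hp1 hpL hv he with h | h | ⟨i, hi, _, h⟩
  · exact absurd (h ▸ (by simp : v ∈ ({nth l (p - 1), v} : Finset ℕ))) hve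
  · exact absurd (h ▸ (by simp : v ∈ ({v, nth l (p % l.length)} : Finset ℕ))) hve
  · exact ⟨i, hi, h⟩

lemma step_edge_v (hnd : l.Nodup) (h3 : 3 ≤ l.length) (hp1 : 1 ≤ p) (hpL : p ≤ l.length)
    (hv : v ∉ l) {x : ℕ} (hx : x ≠ v) (he : E (l.insertIdx p v) ({x, v} : Finset ℕ)) :
    x = nth l (p - 1) ∨ x = nth l (p % l.length) := by
  rcases step_edge_cases hnd h3 hp1 hpL hv he with h | h | ⟨i, hi, _, h⟩
  · rcases pair_eq h with ⟨h1, _⟩ | ⟨h1, _⟩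
    · exact Or.inl h1
    · exact absurd h1 hx
  · rcases pair_eq h with ⟨h1, _⟩ | ⟨h1, h2⟩
    · exact absurd h1 hx
    · exact Or.inr h1
  · exfalso
    have hvmem : v ∈ ({nth l i, nth l ((i + 1) % l.length)} : Finset ℕ) := by
      rw [← h]; simp
    rcases mem_pair.mp hvmem with h1 | h1
    · exact hv (h1 ▸ nth_mem hi)
    · exact hv (h1 ▸ nth_mem (Nat.mod_lt _ (by omega)))

lemma step_nu_edge (hp1 : 1 ≤ p) (hpL : p ≤ l.length) (h3 : 3 ≤ l.length) :
    E l ({nth l (p - 1), nth l (p % l.length)} : Finset ℕ) := by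
  refine ⟨p - 1, by omega, ?_⟩
  have h : p - 1 + 1 = p := by omega
  rw [h]

lemma step_nu_not_edge (hnd : l.Nodup) (h3 : 3 ≤ l.length) (hp1 : 1 ≤ p) (hpL : p ≤ l.length)
    (hv : v ∉ l) :
    ¬ E (l.insertIdx p v) ({nth l (p - 1), nth l (p % l.length)} : Finset ℕ) := by
  intro he
  set L := l.length with hL
  have hp1L : p - 1 < L := by omega
  have hpmL : p % L < L := Nat.mod_lt _ (by omega)
  rcases step_edge_cases hnd h3 hp1 hpL hv he with h | h | ⟨i, hi, hipm, h⟩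
  · rcases pair_eq h with ⟨_, h2⟩ | ⟨h1, _⟩
    · exact hv (h2 ▸ nth_mem hpmL)
    · exact hv (h1 ▸ nth_mem hp1L)
  · rcases pair_eq h with ⟨h1, _⟩ | ⟨_, h2⟩
    · exact hv (h1 ▸ nth_mem hp1L)
    · exact hv (h2 ▸ nth_mem hpmL)
  · have hmod : (i + 1) % L < L := Nat.mod_lt _ (by omega)
    rcases pair_eq h with ⟨h1, _⟩ | ⟨h1, h2⟩
    · exact absurd (nth_inj hnd hp1L hi h1).symm hipm
    · -- p - 1 = (i+1) % L and p % L = i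
      have e1 : p - 1 = (i + 1) % L := nth_inj hnd hp1L hmod h1
      have e2 : p % L = i := nth_inj hnd hpmL hi h2
      by_cases hpe : p = L
      · have hz : p % L = 0 := by rw [hpe]; simp
        rw [hz] at e2
        have : (i + 1) % L = 1 := by rw [← e2]; exact Nat.mod_eq_of_lt (by omega)
        omega
      · have hplt : p < L := by omega
        have hz : p % L = p := Nat.mod_eq_of_lt hplt
        rw [hz] at e2
        subst e2
        by_cases hq : p + 1 = L
        · have : (p + 1) % L = 0 := by rw [hq]; simp
          omega
        · have : (p + 1) % L = p + 1 := Nat.mod_eq_of_lt (by omega)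
          omega

lemma indexOf_insert (hnd : l.Nodup) (hpL : p ≤ l.length) (hv : v ∉ l) :
    (l.insertIdx p v).idxOf v = p := by
  have hnd' : (l.insertIdx p v).Nodup := by
    rw [(List.perm_insertIdx v l hpL).nodup_iff]
    exact List.nodup_cons.mpr ⟨hv, hnd⟩
  have hp' : p < (l.insertIdx p v).length := by
    rw [List.length_insertIdx_of_le_length hpL _]; omega
  have key := List.Nodup.idxOf_getElem hnd' p hp'
  rwa [List.getElem_insertIdx_self hp'] at key

lemma step_new_next (hnd : l.Nodup) (h3 : 3 ≤ l.length) (hp1 : 1 ≤ p) (hpL : p ≤ l.length)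
    (hv : v ∉ l) : cyclicNext (l.insertIdx p v) v = nth l (p % l.length) := by
  set L := l.length with hL
  have hlen : (l.insertIdx p v).length = L + 1 := List.length_insertIdx_of_le_length hpL _
  have hidx : (l.insertIdx p v).idxOf v = p := indexOf_insert hnd hpL hv
  show nth ((l.insertIdx p v).rotate 1) ((l.insertIdx p v).idxOf v) = nth l (p % L)
  rw [hidx, nth_rotate 1 (show p < (l.insertIdx p v).length by omega), hlen]
  by_cases hpe : p = L
  · rw [hpe, Nat.mod_self, Nat.mod_self]
    exact nth_insert_lt (hpe ▸ hpL) (by omega)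
  · have h1 : (p + 1) % (L + 1) = p + 1 := Nat.mod_eq_of_lt (by omega)
    have h2 : p % L = p := Nat.mod_eq_of_lt (by omega)
    rw [h1, h2, nth_insert_gt hpL (by omega) (by omega)]
    congr 1

lemma step_new_prev (hnd : l.Nodup) (h3 : 3 ≤ l.length) (hp1 : 1 ≤ p) (hpL : p ≤ l.length)
    (hv : v ∉ l) : cyclicPrev (l.insertIdx p v) v = nth l (p - 1) := by
  set L := l.length with hL
  have hlen : (l.insertIdx p v).length = L + 1 := List.length_insertIdx_of_le_length hpL _
  have hidx : (l.insertIdx p v).idxOf v = p := indexOf_insert hnd hpL hv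
  show nth ((l.insertIdx p v).rotate ((l.insertIdx p v).length - 1))
      ((l.insertIdx p v).idxOf v) = nth l (p - 1)
  rw [hidx, nth_rotate _ (show p < (l.insertIdx p v).length by omega), hlen]
  have h1 : (p + (L + 1 - 1)) % (L + 1) = p - 1 := by
    have e : p + (L + 1 - 1) = (p - 1) + (L + 1) := by omega
    rw [e, Nat.add_mod_right]
    exact Nat.mod_eq_of_lt (by omega)
  rw [h1]
  exact nth_insert_lt hpL (by omega)

end Step

section ListOf

variable (c : InfCycle)

lemma listOf_spec : ∀ N : ℕ, (listOf c (N + 3)).length = N + 3 ∧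
    (listOf c (N + 3)).Nodup ∧ ∀ x ∈ listOf c (N + 3), 1 ≤ x ∧ x ≤ N + 3 := by
  intro N
  induction N with
  | zero =>
    have h0 : listOf c (0 + 3) = [1, 2, 3] := rfl
    refine ⟨by rw [h0]; rfl, by rw [h0]; decide, ?_⟩
    intro x hx
    rw [h0] at hx
    simp at hx
    omega
  | succ N ih =>
    obtain ⟨hlen, hnd, hmem⟩ := ih
    have hple : (c N).val + 1 ≤ (listOf c (N + 3)).length := by
      have := (c N).isLt; omega
    have hperm := List.perm_insertIdx (N + 4) (listOf c (N + 3)) hple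
    have hstep : listOf c (N + 4) = (listOf c (N + 3)).insertIdx ((c N).val + 1) (N + 4) := rfl
    have hv : (N + 4) ∉ listOf c (N + 3) := fun h => by have := hmem _ h; omega
    refine ⟨?_, ?_, ?_⟩
    · rw [hstep, List.length_insertIdx_of_le_length hple _, hlen]
    · rw [hstep, hperm.nodup_iff]
      exact List.nodup_cons.mpr ⟨hv, hnd⟩
    · intro x hx
      rw [hstep] at hx
      rw [hperm.mem_iff, List.mem_cons] at hx
      rcases hx with rfl | hx
      · omega
      · have := hmem _ hx; omega

lemma length_listOf (N : ℕ) : (listOf c (N + 3)).length = N + 3 := (listOf_spec c N).1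

lemma nodup_listOf (N : ℕ) : (listOf c (N + 3)).Nodup := (listOf_spec c N).2.1

lemma mem_listOf_bound (N : ℕ) {x : ℕ} (hx : x ∈ listOf c (N + 3)) : 1 ≤ x ∧ x ≤ N + 3 :=
  (listOf_spec c N).2.2 x hx

lemma cycleEdges_iff (N : ℕ) {e : Finset ℕ} :
    e ∈ cycleEdges c (N + 3) ↔ E (listOf c (N + 3)) e := by
  unfold cycleEdges
  exact mem_cycleEdges_iff (by rw [length_listOf]; omega)

/-- Data for the insertion step producing `A_{N+4}`. -/
lemma step_hyps (N : ℕ) :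
    (listOf c (N + 3)).Nodup ∧ 3 ≤ (listOf c (N + 3)).length ∧
      1 ≤ (c N).val + 1 ∧ (c N).val + 1 ≤ (listOf c (N + 3)).length ∧
      (N + 4) ∉ listOf c (N + 3) := by
  refine ⟨nodup_listOf c N, by rw [length_listOf]; omega, by omega,
    by rw [length_listOf]; have := (c N).isLt; omega, ?_⟩
  intro h
  have := mem_listOf_bound c N h
  omega

lemma nuPlus_eq (N : ℕ) :
    nuPlus c (N + 4) = nth (listOf c (N + 3)) (((c N).val + 1) % (listOf c (N + 3)).length) := by
  obtain ⟨hnd, h3, hp1, hpL, hv⟩ := step_hyps c N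
  have h1 : nuPlus c (N + 4) =
      cyclicNext ((listOf c (N + 3)).insertIdx ((c N).val + 1) (N + 4)) (N + 4) := by
    unfold nuPlus
    rw [if_neg (show ¬(N + 4 ≤ 1) by omega), if_neg (show ¬(N + 4 = 2) by omega)]
    rfl
  rw [h1]
  exact step_new_next hnd h3 hp1 hpL hv

lemma nuMinus_eq (N : ℕ) :
    nuMinus c (N + 4) = nth (listOf c (N + 3)) ((c N).val) := by
  obtain ⟨hnd, h3, hp1, hpL, hv⟩ := step_hyps c N
  have h1 : nuMinus c (N + 4) =
      cyclicPrev ((listOf c (N + 3)).insertIdx ((c N).val + 1) (N + 4)) (N + 4) := by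
    unfold nuMinus
    rw [if_neg (show ¬(N + 4 ≤ 1) by omega), if_neg (show ¬(N + 4 = 2) by omega)]
    rfl
  rw [h1]
  have key := step_new_prev hnd h3 hp1 hpL hv
  simpa using key

lemma nuSet_eq (N : ℕ) :
    nuSet c (N + 4) = {nth (listOf c (N + 3)) ((c N).val),
      nth (listOf c (N + 3)) (((c N).val + 1) % (listOf c (N + 3)).length)} := by
  unfold nuSet
  rw [nuPlus_eq, nuMinus_eq, Finset.pair_comm]

lemma nuSet_mem_edges (N : ℕ) : nuSet c (N + 4) ∈ cycleEdges c (N + 3) := by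
  obtain ⟨hnd, h3, hp1, hpL, hv⟩ := step_hyps c N
  rw [cycleEdges_iff, nuSet_eq]
  have key := step_nu_edge (l := listOf c (N + 3)) (p := (c N).val + 1) hp1 hpL h3
  simpa using key

lemma nuSet_bound (N : ℕ) {x : ℕ} (hx : x ∈ nuSet c (N + 4)) : 1 ≤ x ∧ x < N + 4 := by
  obtain ⟨hnd, h3, hp1, hpL, hv⟩ := step_hyps c N
  rw [nuSet_eq] at hx
  rcases mem_pair.mp hx with rfl | rfl
  · have hm := mem_listOf_bound c N (nth_mem (l := listOf c (N + 3)) (i := (c N).val)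
      (by rw [length_listOf]; have := (c N).isLt; omega))
    omega
  · have hm := mem_listOf_bound c N
      (nth_mem (l := listOf c (N + 3)) (i := ((c N).val + 1) % (listOf c (N + 3)).length)
        (Nat.mod_lt _ (by rw [length_listOf]; omega)))
    omega

lemma nuSet_bound' {k x : ℕ} (hk : 4 ≤ k) (hx : x ∈ nuSet c k) : 1 ≤ x ∧ x < k := by
  obtain ⟨N, rfl⟩ : ∃ N, k = N + 4 := ⟨k - 4, by omega⟩
  exact nuSet_bound c N hx

lemma nuPlus_ne_nuMinus {m : ℕ} (hm : 4 ≤ m) : nuPlus c m ≠ nuMinus c m := by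
  obtain ⟨N, rfl⟩ : ∃ N, m = N + 4 := ⟨m - 4, by omega⟩
  obtain ⟨hnd, h3, hp1, hpL, hv⟩ := step_hyps c N
  rw [nuPlus_eq, nuMinus_eq]
  intro h
  have hL : (listOf c (N + 3)).length = N + 3 := length_listOf c N
  have hlt : (c N).val < N + 3 := (c N).isLt
  have h1 : ((c N).val + 1) % (listOf c (N + 3)).length < (listOf c (N + 3)).length :=
    Nat.mod_lt _ (by omega)
  have h2 : (c N).val < (listOf c (N + 3)).length := by omega
  have heq := nth_inj hnd h1 h2 h
  rw [hL] at heq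
  by_cases hpe : (c N).val + 1 = N + 3
  · rw [hpe, Nat.mod_self] at heq; omega
  · rw [Nat.mod_eq_of_lt (by omega)] at heq; omega

lemma nuSet_not_edge {k : ℕ} (hk : 4 ≤ k) : ∀ t, k ≤ t → nuSet c k ∉ cycleEdges c t := by
  obtain ⟨N, rfl⟩ : ∃ N, k = N + 4 := ⟨k - 4, by omega⟩
  intro t ht
  induction t, ht using Nat.le_induction with
  | base =>
    intro he
    obtain ⟨hnd, h3, hp1, hpL, hv⟩ := step_hyps c N
    have he' : E ((listOf c (N + 3)).insertIdx ((c N).val + 1) (N + 4)) (nuSet c (N + 4)) :=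
      (cycleEdges_iff c (N + 1)).mp he
    rw [nuSet_eq] at he'
    have key := step_nu_not_edge hnd h3 hp1 hpL hv
    simp only [Nat.add_sub_cancel] at key
    exact key he'
  | succ t ht ih =>
    obtain ⟨M, rfl⟩ : ∃ M, t = M + 3 := ⟨t - 3, by omega⟩
    intro he
    obtain ⟨hnd, h3, hp1, hpL, hv⟩ := step_hyps c M
    have he' : E ((listOf c (M + 3)).insertIdx ((c M).val + 1) (M + 4)) (nuSet c (N + 4)) :=
      (cycleEdges_iff c (M + 1)).mp he
    have hvne : (M + 4) ∉ nuSet c (N + 4) := fun hx => by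
      have := nuSet_bound c N hx; omega
    exact ih ((cycleEdges_iff c M).mpr (step_edge_old hnd h3 hp1 hpL hv he' hvne))

lemma nuSet_inj {k k' : ℕ} (hk : 4 ≤ k) (hk' : 4 ≤ k') (h : nuSet c k = nuSet c k') : k = k' := by
  rcases lt_trichotomy k k' with hlt | heq | hgt
  · exfalso
    obtain ⟨N', rfl⟩ : ∃ N', k' = N' + 4 := ⟨k' - 4, by omega⟩
    have h1 := nuSet_mem_edges c N'
    rw [← h] at h1
    exact nuSet_not_edge c hk (N' + 3) (by omega) h1
  · exact heq
  · exfalso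
    obtain ⟨N, rfl⟩ : ∃ N, k = N + 4 := ⟨k - 4, by omega⟩
    have h1 := nuSet_mem_edges c N
    rw [h] at h1
    exact nuSet_not_edge c hk' (N + 3) (by omega) h1

lemma mem_nuSet_of_edge {x y : ℕ} (hxy : x < y) (hy : 4 ≤ y) :
    ∀ t, y ≤ t → ({x, y} : Finset ℕ) ∈ cycleEdges c t → x ∈ nuSet c y := by
  intro t ht
  induction t, ht using Nat.le_induction with
  | base =>
    intro he
    obtain ⟨N, hy4⟩ : ∃ N, y = N + 4 := ⟨y - 4, by omega⟩
    subst hy4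
    obtain ⟨hnd, h3, hp1, hpL, hv⟩ := step_hyps c N
    have he' : E ((listOf c (N + 3)).insertIdx ((c N).val + 1) (N + 4)) ({x, N + 4} : Finset ℕ) :=
      (cycleEdges_iff c (N + 1)).mp he
    have hres := step_edge_v hnd h3 hp1 hpL hv (show x ≠ N + 4 by omega) he'
    rw [nuSet_eq, mem_pair]
    rcases hres with h | h
    · left; rw [h]; congr 1
    · right; exact h
  | succ t ht ih =>
    intro he
    obtain ⟨M, rfl⟩ : ∃ M, t = M + 3 := ⟨t - 3, by omega⟩
    obtain ⟨hnd, h3, hp1, hpL, hv⟩ := step_hyps c M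
    have he' : E ((listOf c (M + 3)).insertIdx ((c M).val + 1) (M + 4)) ({x, y} : Finset ℕ) :=
      (cycleEdges_iff c (M + 1)).mp he
    have hvne : (M + 4) ∉ ({x, y} : Finset ℕ) := by
      rw [mem_pair]; omega
    exact ih ((cycleEdges_iff c M).mpr (step_edge_old hnd h3 hp1 hpL hv he' hvne))

end ListOf

lemma min_max_pair (P Q : ℕ) : ({P, Q} : Finset ℕ) = {min P Q, max P Q} := by
  rcases le_total P Q with h | h
  · rw [min_eq_left h, max_eq_right h]
  · rw [min_eq_right h, max_eq_left h, Finset.pair_comm]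

lemma side_conflict (a b : InfCycle) {m k1 k2 : ℕ} (hm : 4 ≤ m) (h1 : 4 ≤ k1) (h2 : 4 ≤ k2)
    (e1 : nuSet a m = nuSet b k1)
    (e2 : k2 = max (nuPlus a m) (nuMinus a m)) (hdisj : nuSet b k2 ∩ nuSet a m = ∅) : False := by
  set P := nuPlus a m
  set Q := nuMinus a m
  have hPQ : P ≠ Q := nuPlus_ne_nuMinus a hm
  set x := min P Q with hx
  have hxk2 : x < k2 := by rw [e2, hx]; omega
  have hpair : nuSet a m = ({x, k2} : Finset ℕ) := by
    rw [show nuSet a m = ({P, Q} : Finset ℕ) from rfl, min_max_pair, ← e2]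
  have hk2mem : k2 ∈ nuSet b k1 := by
    rw [← e1, hpair, mem_pair]; right; rfl
  have hk2lt : k2 < k1 := (nuSet_bound' b h1 hk2mem).2
  obtain ⟨K, rfl⟩ : ∃ K, k1 = K + 4 := ⟨k1 - 4, by omega⟩
  have hedge : ({x, k2} : Finset ℕ) ∈ cycleEdges b (K + 3) := by
    rw [← hpair, e1]; exact nuSet_mem_edges b K
  have hxnu : x ∈ nuSet b k2 := mem_nuSet_of_edge b hxk2 h2 (K + 3) (by omega) hedge
  have hxm : x ∈ nuSet a m := by rw [hpair, mem_pair]; left; rfl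
  have hmem : x ∈ nuSet b k2 ∩ nuSet a m := Finset.mem_inter.mpr ⟨hxnu, hxm⟩
  rw [hdisj] at hmem
  exact absurd hmem (Finset.notMem_empty x)

lemma side_unique (a b : InfCycle) {m k1 k2 : ℕ} (hm : 4 ≤ m) (h1 : 4 ≤ k1) (h2 : 4 ≤ k2)
    (p1 : nuSet a m = nuSet b k1 ∨
      (k1 = max (nuPlus a m) (nuMinus a m) ∧ nuSet b k1 ∩ nuSet a m = ∅))
    (p2 : nuSet a m = nuSet b k2 ∨
      (k2 = max (nuPlus a m) (nuMinus a m) ∧ nuSet b k2 ∩ nuSet a m = ∅)) :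
    k1 = k2 := by
  rcases p1 with h1e | ⟨hmax1, hd1⟩ <;> rcases p2 with h2e | ⟨hmax2, hd2⟩
  · exact nuSet_inj b h1 h2 (h1e.symm.trans h2e)
  · exact (side_conflict a b hm h1 h2 h1e hmax2 hd2).elim
  · exact (side_conflict a b hm h2 h1 h2e hmax1 hd1).elim
  · rw [hmax1, hmax2]

end PedigreeAux

/-- Every vertex of a pedigree graph has at most 2 neighbors smaller
than itself (at most 2 edges to vertices created in the past). -/
theorem pedigree_graph_past_degree_le_two (a b : InfCycle) (n m : ℕ) :
    {k : ℕ | (pedigreeGraph a b n).Adj m k ∧ k < m}.Finite ∧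
    {k : ℕ | (pedigreeGraph a b n).Adj m k ∧ k < m}.ncard ≤ 2 := by
  classical
  set S := {k : ℕ | (pedigreeGraph a b n).Adj m k ∧ k < m} with hSdef
  have hmemS : ∀ k ∈ S, 4 ≤ m ∧ 4 ≤ k ∧
      ((nuSet a m = nuSet b k ∨
        (k = max (nuPlus a m) (nuMinus a m) ∧ nuSet b k ∩ nuSet a m = ∅)) ∨
       (nuSet b m = nuSet a k ∨
        (k = max (nuPlus b m) (nuMinus b m) ∧ nuSet a k ∩ nuSet b m = ∅))) := by
    rintro k ⟨hadj, hkm⟩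
    obtain ⟨hvm, hvk, hor⟩ : isVertex a b n m ∧ isVertex a b n k ∧
        ((m < k ∧ edgeCond a b m k) ∨ (k < m ∧ edgeCond a b k m)) := hadj
    refine ⟨hvm.1, hvk.1, ?_⟩
    rcases hor with ⟨hmk, _⟩ | ⟨_, hec⟩
    · omega
    · rcases hec with h | h | h | h
      · exact Or.inl (Or.inl h)
      · exact Or.inr (Or.inl h)
      · exact Or.inl (Or.inr h)
      · exact Or.inr (Or.inr h)
  set SA : Set ℕ := {k ∈ S | nuSet a m = nuSet b k ∨
      (k = max (nuPlus a m) (nuMinus a m) ∧ nuSet b k ∩ nuSet a m = ∅)} with hSA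
  set SB : Set ℕ := {k ∈ S | nuSet b m = nuSet a k ∨
      (k = max (nuPlus b m) (nuMinus b m) ∧ nuSet a k ∩ nuSet b m = ∅)} with hSB
  have hsubA : SA.Subsingleton := by
    rintro k1 ⟨hk1S, hk1⟩ k2 ⟨hk2S, hk2⟩
    obtain ⟨hm4, hk14, -⟩ := hmemS k1 hk1S
    obtain ⟨-, hk24, -⟩ := hmemS k2 hk2S
    exact PedigreeAux.side_unique a b hm4 hk14 hk24 hk1 hk2
  have hsubB : SB.Subsingleton := by
    rintro k1 ⟨hk1S, hk1⟩ k2 ⟨hk2S, hk2⟩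
    obtain ⟨hm4, hk14, -⟩ := hmemS k1 hk1S
    obtain ⟨-, hk24, -⟩ := hmemS k2 hk2S
    exact PedigreeAux.side_unique b a hm4 hk14 hk24 hk1 hk2
  have hdecomp : S = SA ∪ SB := by
    ext k
    constructor
    · intro hk
      rcases (hmemS k hk).2.2 with h | h
      · exact Or.inl ⟨hk, h⟩
      · exact Or.inr ⟨hk, h⟩
    · rintro (⟨hk, -⟩ | ⟨hk, -⟩) <;> exact hk
  have hfin : S.Finite := by
    rw [hdecomp]
    exact hsubA.finite.union hsubB.finite
  refine ⟨hfin, ?_⟩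
  calc S.ncard = (SA ∪ SB).ncard := by rw [← hdecomp]
    _ ≤ SA.ncard + SB.ncard := Set.ncard_union_le _ _
    _ ≤ 1 + 1 := add_le_add
        ((Set.ncard_le_one hsubA.finite).mpr fun x hx y hy => hsubA hx hy)
        ((Set.ncard_le_one hsubB.finite).mpr fun x hx y hy => hsubB hx hy)
end

section
/- For all infinite cycles A and B and all n, the maximum degree of a vertex in the pedigree graph G_n^{AB} is at most 6. -/
open MeasureTheory

namespace PedigreeDegreeAux

lemma mem_edgeList_iff {l : List ℕ} (e : Finset ℕ) :
    e ∈ edgeList l ↔ ∃ i < l.length, e = {l.getD i 0, l.getD ((i+1) % l.length) 0} := by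
  constructor
  · intro he
    rw [edgeList] at he
    obtain ⟨i, hi, hei⟩ := List.mem_iff_getElem.mp he
    rw [List.length_zipWith, List.length_rotate, Nat.min_self] at hi
    have h1 : (i+1) % l.length < l.length := Nat.mod_lt _ (by omega)
    refine ⟨i, hi, ?_⟩
    rw [List.getElem_zipWith, List.getElem_rotate] at hei
    rw [← hei, List.getD_eq_getElem _ _ hi, List.getD_eq_getElem _ _ h1]
  · rintro ⟨i, hi, rfl⟩
    rw [edgeList]
    apply List.mem_iff_getElem.mpr
    have h1 : (i+1) % l.length < l.length := Nat.mod_lt _ (by omega)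
    refine ⟨i, by rw [List.length_zipWith, List.length_rotate, Nat.min_self]; exact hi, ?_⟩
    rw [List.getElem_zipWith, List.getElem_rotate,
      List.getD_eq_getElem _ _ hi, List.getD_eq_getElem _ _ h1]

lemma indexOf_insertIdx {v : ℕ} : ∀ (l : List ℕ) (q : ℕ), v ∉ l → q ≤ l.length →
    (l.insertIdx q v).idxOf v = q := by
  intro l q
  induction q generalizing l with
  | zero => intro _ _; simp [List.idxOf_cons_self]
  | succ q ih =>
    intro hv hq
    cases l with
    | nil => simp at hq
    | cons a t =>
      rw [List.insertIdx_succ_cons]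
      have hva : a ≠ v := fun h => hv (h ▸ List.mem_cons_self)
      rw [List.idxOf_cons_ne _ hva, ih t (fun h => hv (List.mem_cons_of_mem _ h))
        (Nat.le_of_succ_le_succ hq)]

lemma nodup_insertIdx {v : ℕ} : ∀ (l : List ℕ) (q : ℕ), v ∉ l → l.Nodup → q ≤ l.length →
    (l.insertIdx q v).Nodup := by
  intro l q
  induction q generalizing l with
  | zero => intro hv hl _; simpa using ⟨hv, hl⟩
  | succ q ih =>
    intro hv hl hq
    cases l with
    | nil => simp at hq
    | cons a t =>
      rw [List.insertIdx_succ_cons, List.nodup_cons]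
      rw [List.nodup_cons] at hl
      refine ⟨?_, ih t (fun h => hv (List.mem_cons_of_mem _ h)) hl.2 (Nat.le_of_succ_le_succ hq)⟩
      intro hmem
      rcases (List.mem_insertIdx (Nat.le_of_succ_le_succ hq)).mp hmem with h | h
      · exact hv (h ▸ List.mem_cons_self)
      · exact hl.1 h

lemma getD_rotate {l : List ℕ} {n i : ℕ} (hi : i < l.length) :
    (l.rotate n).getD i 0 = l.getD ((i + n) % l.length) 0 := by
  have h1 : i < (l.rotate n).length := by rw [List.length_rotate]; exact hi
  have h2 : (i + n) % l.length < l.length := Nat.mod_lt _ (by omega)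
  rw [List.getD_eq_getElem _ _ h1, List.getD_eq_getElem _ _ h2, List.getElem_rotate]

lemma getD_mem {l : List ℕ} {i : ℕ} (hi : i < l.length) : l.getD i 0 ∈ l := by
  rw [List.getD_eq_getElem _ _ hi]; exact List.getElem_mem _

section InsertLemmas

variable {l : List ℕ} {q v i : ℕ}

lemma getD_insertIdx_lt (hq : q ≤ l.length) (hi : i < q) :
    (l.insertIdx q v).getD i 0 = l.getD i 0 := by
  have hil : i < l.length := lt_of_lt_of_le hi hq
  have hil' : i < (l.insertIdx q v).length := by
    rw [List.length_insertIdx_of_le_length hq _]; omega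
  rw [List.getD_eq_getElem _ _ hil', List.getD_eq_getElem _ _ hil,
    List.getElem_insertIdx_of_lt hi hil']

lemma getD_insertIdx_self (hq : q ≤ l.length) :
    (l.insertIdx q v).getD q 0 = v := by
  have hq' : q < (l.insertIdx q v).length := by rw [List.length_insertIdx_of_le_length hq _]; omega
  rw [List.getD_eq_getElem _ _ hq', List.getElem_insertIdx_self hq']

lemma getD_insertIdx_gt (hq : q ≤ l.length) (hiq : q < i) (hi : i ≤ l.length) :
    (l.insertIdx q v).getD i 0 = l.getD (i - 1) 0 := by
  have h1 : i - 1 < l.length := by omega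
  have h2 : i < (l.insertIdx q v).length := by rw [List.length_insertIdx_of_le_length hq _]; omega
  have hk : q + (i - q - 1) < l.length := by omega
  have he : i = q + (i - q - 1) + 1 := by omega
  rw [List.getD_eq_getElem _ _ h2, List.getD_eq_getElem _ _ h1]
  have := List.getElem_insertIdx_add_succ l v q (i - q - 1) hk
  convert this using 2 <;> omega

lemma cyclicNext_insertIdx (hq1 : 1 ≤ q) (hq2 : q ≤ l.length) (hN : 3 ≤ l.length)
    (hv : v ∉ l) : cyclicNext (l.insertIdx q v) v = l.getD (q % l.length) 0 := by
  have hlen : (l.insertIdx q v).length = l.length + 1 := List.length_insertIdx_of_le_length hq2 _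
  have hq' : q < (l.insertIdx q v).length := by omega
  rw [cyclicNext, indexOf_insertIdx l q hv hq2, getD_rotate hq']
  rw [hlen]
  rcases eq_or_lt_of_le hq2 with heq | hlt
  · have h0 : (q + 1) % (l.length + 1) = 0 := by rw [heq]; simp
    have h0' : q % l.length = 0 := by rw [heq]; simp
    rw [h0, h0', getD_insertIdx_lt hq2 (by omega)]
  · have h0 : (q + 1) % (l.length + 1) = q + 1 := Nat.mod_eq_of_lt (by omega)
    have h0' : q % l.length = q := Nat.mod_eq_of_lt hlt
    rw [h0, h0', getD_insertIdx_gt hq2 (by omega) (by omega)]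
    simp

lemma cyclicPrev_insertIdx (hq1 : 1 ≤ q) (hq2 : q ≤ l.length) (hN : 3 ≤ l.length)
    (hv : v ∉ l) : cyclicPrev (l.insertIdx q v) v = l.getD (q - 1) 0 := by
  have hlen : (l.insertIdx q v).length = l.length + 1 := List.length_insertIdx_of_le_length hq2 _
  have hq' : q < (l.insertIdx q v).length := by omega
  rw [cyclicPrev, indexOf_insertIdx l q hv hq2, getD_rotate hq']
  rw [hlen]
  have h0 : (q + (l.length + 1 - 1)) % (l.length + 1) = q - 1 := by
    have h : q + (l.length + 1 - 1) = (q - 1) + 1 * (l.length + 1) := by omega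
    rw [h, Nat.add_mul_mod_self_right]
    exact Nat.mod_eq_of_lt (by omega)
  rw [h0, getD_insertIdx_lt hq2 (by omega)]

lemma xy_mem_edgeList (hq1 : 1 ≤ q) (hq2 : q ≤ l.length) (hN : 3 ≤ l.length) :
    ({l.getD (q - 1) 0, l.getD (q % l.length) 0} : Finset ℕ) ∈ edgeList l := by
  refine (mem_edgeList_iff _).mpr ⟨q - 1, by omega, ?_⟩
  have h : q - 1 + 1 = q := by omega
  rw [h]

lemma edge_insertIdx_sub (hq1 : 1 ≤ q) (hq2 : q ≤ l.length) (hN : 3 ≤ l.length)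
    (hnd : l.Nodup) (hv : v ∉ l) :
    ∀ e ∈ edgeList (l.insertIdx q v),
      e = {l.getD (q - 1) 0, v} ∨ e = {v, l.getD (q % l.length) 0} ∨
      (e ∈ edgeList l ∧ e ≠ ({l.getD (q - 1) 0, l.getD (q % l.length) 0} : Finset ℕ)) := by
  set n := l.length with hn
  have hlen : (l.insertIdx q v).length = n + 1 := List.length_insertIdx_of_le_length hq2 _
  have hinj : ∀ i j : ℕ, i < n → j < n → l.getD i 0 = l.getD j 0 → i = j := by
    intro i j hi hj hij
    rw [List.getD_eq_getElem _ _ hi, List.getD_eq_getElem _ _ hj] at hij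
    exact (List.Nodup.getElem_inj_iff hnd).mp hij
  have hmod : (q = n ∧ q % n = 0) ∨ (q < n ∧ q % n = q) := by
    rcases eq_or_lt_of_le hq2 with h | h
    · exact Or.inl ⟨h, by rw [h]; simp⟩
    · exact Or.inr ⟨h, Nat.mod_eq_of_lt h⟩
  have hqmlt : q % n < n := Nat.mod_lt _ (by omega)
  intro e he
  obtain ⟨i, hi, rfl⟩ := (mem_edgeList_iff e).mp he
  rw [hlen] at hi ⊢
  by_cases hiq : i = q
  · subst hiq
    refine Or.inr (Or.inl ?_)
    rw [getD_insertIdx_self hq2]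
    congr 1
    rcases hmod with ⟨h1, h2⟩ | ⟨h1, h2⟩
    · have h0 : (i + 1) % (n + 1) = 0 := by rw [h1]; simp
      rw [h0, h2, getD_insertIdx_lt hq2 (by omega)]
    · have h0 : (i + 1) % (n + 1) = i + 1 := Nat.mod_eq_of_lt (by omega)
      rw [h0, h2, getD_insertIdx_gt hq2 (by omega) (by omega)]
      simp
  · by_cases hiq1 : i + 1 = q
    · refine Or.inl ?_
      have h0 : (i + 1) % (n + 1) = q := by
        rw [hiq1]; apply Nat.mod_eq_of_lt; omega
      rw [h0, getD_insertIdx_self hq2, getD_insertIdx_lt hq2 (by omega)]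
      rw [show i = q - 1 by omega]
    · rcases lt_or_gt_of_ne hiq with hilt | higt
      · -- i + 1 < q
        have hi1q : i + 1 < q := by omega
        have h0 : (i + 1) % (n + 1) = i + 1 := Nat.mod_eq_of_lt (by omega)
        rw [h0, getD_insertIdx_lt hq2 (by omega), getD_insertIdx_lt hq2 (by omega)]
        refine Or.inr (Or.inr ⟨?_, ?_⟩)
        · refine (mem_edgeList_iff _).mpr ⟨i, by omega, ?_⟩
          have h : (i + 1) % n = i + 1 := Nat.mod_eq_of_lt (by omega)
          rw [h]
        · intro hcon
          have h1 : l.getD i 0 ∈ ({l.getD (q - 1) 0, l.getD (q % n) 0} : Finset ℕ) := by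
            rw [← hcon]; exact Finset.mem_insert_self _ _
          have h2 : l.getD (i + 1) 0 ∈ ({l.getD (q - 1) 0, l.getD (q % n) 0} : Finset ℕ) := by
            rw [← hcon]; exact Finset.mem_insert_of_mem (Finset.mem_singleton_self _)
          rw [Finset.mem_insert, Finset.mem_singleton] at h1 h2
          have e1 : i = q - 1 ∨ i = q % n := by
            rcases h1 with h | h
            · exact Or.inl (hinj _ _ (by omega) (by omega) h)
            · exact Or.inr (hinj _ _ (by omega) hqmlt h)
          have e2 : i + 1 = q - 1 ∨ i + 1 = q % n := by
            rcases h2 with h | h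
            · exact Or.inl (hinj _ _ (by omega) (by omega) h)
            · exact Or.inr (hinj _ _ (by omega) hqmlt h)
          omega
      · -- q < i
        rcases lt_or_eq_of_le (Nat.lt_succ_iff.mp hi) with hiN | hiN
        · -- q < i < n
          have h0 : (i + 1) % (n + 1) = i + 1 := Nat.mod_eq_of_lt (by omega)
          rw [h0, getD_insertIdx_gt hq2 higt (by omega),
            getD_insertIdx_gt hq2 (by omega) (by omega)]
          refine Or.inr (Or.inr ⟨?_, ?_⟩)
          · refine (mem_edgeList_iff _).mpr ⟨i - 1, by omega, ?_⟩
            have h : (i - 1 + 1) % n = i + 1 - 1 := by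
              rw [show i - 1 + 1 = i by omega]
              rw [show i + 1 - 1 = i by omega]
              exact Nat.mod_eq_of_lt (by omega)
            rw [h]
          · intro hcon
            have h1 : l.getD (i - 1) 0 ∈ ({l.getD (q - 1) 0, l.getD (q % n) 0} : Finset ℕ) := by
              rw [← hcon]; exact Finset.mem_insert_self _ _
            have h2 : l.getD (i + 1 - 1) 0 ∈ ({l.getD (q - 1) 0, l.getD (q % n) 0} : Finset ℕ) := by
              rw [← hcon]; exact Finset.mem_insert_of_mem (Finset.mem_singleton_self _)
            rw [Finset.mem_insert, Finset.mem_singleton] at h1 h2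
            have e1 : i - 1 = q - 1 ∨ i - 1 = q % n := by
              rcases h1 with h | h
              · exact Or.inl (hinj _ _ (by omega) (by omega) h)
              · exact Or.inr (hinj _ _ (by omega) hqmlt h)
            have e2 : i + 1 - 1 = q - 1 ∨ i + 1 - 1 = q % n := by
              rcases h2 with h | h
              · exact Or.inl (hinj _ _ (by omega) (by omega) h)
              · exact Or.inr (hinj _ _ (by omega) hqmlt h)
            omega
        · -- i = n, q < n
          have h0 : (i + 1) % (n + 1) = 0 := by rw [hiN]; simp
          rw [h0, getD_insertIdx_gt hq2 higt (by omega), getD_insertIdx_lt hq2 (by omega)]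
          refine Or.inr (Or.inr ⟨?_, ?_⟩)
          · refine (mem_edgeList_iff _).mpr ⟨i - 1, by omega, ?_⟩
            have h : (i - 1 + 1) % n = 0 := by
              rw [show i - 1 + 1 = i by omega, hiN]; simp
            rw [h]
          · intro hcon
            have h1 : l.getD (i - 1) 0 ∈ ({l.getD (q - 1) 0, l.getD (q % n) 0} : Finset ℕ) := by
              rw [← hcon]; exact Finset.mem_insert_self _ _
            have h2 : l.getD 0 0 ∈ ({l.getD (q - 1) 0, l.getD (q % n) 0} : Finset ℕ) := by
              rw [← hcon]; exact Finset.mem_insert_of_mem (Finset.mem_singleton_self _)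
            rw [Finset.mem_insert, Finset.mem_singleton] at h1 h2
            have e1 : i - 1 = q - 1 ∨ i - 1 = q % n := by
              rcases h1 with h | h
              · exact Or.inl (hinj _ _ (by omega) (by omega) h)
              · exact Or.inr (hinj _ _ (by omega) hqmlt h)
            have e2 : (0 : ℕ) = q - 1 ∨ (0 : ℕ) = q % n := by
              rcases h2 with h | h
              · exact Or.inl (hinj _ _ (by omega) (by omega) h)
              · exact Or.inr (hinj _ _ (by omega) hqmlt h)
            omega

end InsertLemmas

end PedigreeDegreeAux
section CycleLemmas

lemma listOf_spec (c : InfCycle) : ∀ n : ℕ, (listOf c (n+3)).length = n + 3 ∧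
    (listOf c (n+3)).Nodup ∧ ∀ x ∈ listOf c (n+3), 1 ≤ x ∧ x ≤ n + 3 := by
  intro n
  induction n with
  | zero =>
    refine ⟨rfl, ?_, ?_⟩
    · exact (by decide : ([1,2,3] : List ℕ).Nodup)
    intro x hx
    have : x ∈ [1, 2, 3] := hx
    fin_cases this <;> omega
  | succ n ih =>
    obtain ⟨hlen, hnd, hmem⟩ := ih
    have hq2 : (c n).val + 1 ≤ (listOf c (n+3)).length := by
      have := (c n).isLt; omega
    have hv : (n + 4) ∉ listOf c (n+3) := fun h => by have := (hmem _ h).2; omega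
    have hstep : listOf c (n+1+3) = (listOf c (n+3)).insertIdx ((c n).val + 1) (n+4) := rfl
    refine ⟨?_, ?_, ?_⟩
    · rw [hstep, List.length_insertIdx_of_le_length hq2 _, hlen]
    · rw [hstep]; exact PedigreeDegreeAux.nodup_insertIdx _ _ hv hnd hq2
    · intro x hx
      rw [hstep] at hx
      rcases (List.mem_insertIdx hq2).mp hx with h | h
      · omega
      · have := hmem _ h; omega

lemma nuPlus_eq (c : InfCycle) (n : ℕ) : nuPlus c (n+4) =
    (listOf c (n+3)).getD (((c n).val + 1) % (n+3)) 0 := by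
  obtain ⟨hlen, hnd, hmem⟩ := listOf_spec c n
  have hv : (n + 4) ∉ listOf c (n+3) := fun h => by have := (hmem _ h).2; omega
  have h1 : ¬ (n + 4 ≤ 1) := by omega
  have h2 : ¬ (n + 4 = 2) := by omega
  rw [nuPlus, if_neg h1, if_neg h2]
  have hstep : listOf c (n+4) = (listOf c (n+3)).insertIdx ((c n).val + 1) (n+4) := rfl
  rw [hstep, PedigreeDegreeAux.cyclicNext_insertIdx (by omega) (by omega) (by omega) hv, hlen]

lemma nuMinus_eq (c : InfCycle) (n : ℕ) : nuMinus c (n+4) =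
    (listOf c (n+3)).getD ((c n).val) 0 := by
  obtain ⟨hlen, hnd, hmem⟩ := listOf_spec c n
  have hv : (n + 4) ∉ listOf c (n+3) := fun h => by have := (hmem _ h).2; omega
  have h1 : ¬ (n + 4 ≤ 1) := by omega
  have h2 : ¬ (n + 4 = 2) := by omega
  rw [nuMinus, if_neg h1, if_neg h2]
  have hstep : listOf c (n+4) = (listOf c (n+3)).insertIdx ((c n).val + 1) (n+4) := rfl
  rw [hstep, PedigreeDegreeAux.cyclicPrev_insertIdx (by omega) (by omega) (by omega) hv]
  simp

lemma nuSet_mem_cycleEdges (c : InfCycle) (n : ℕ) :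
    nuSet c (n+4) ∈ cycleEdges c (n+3) := by
  obtain ⟨hlen, hnd, hmem⟩ := listOf_spec c n
  rw [cycleEdges, List.mem_toFinset, nuSet, nuPlus_eq, nuMinus_eq, Finset.pair_comm]
  have h := PedigreeDegreeAux.xy_mem_edgeList (l := listOf c (n+3)) (q := (c n).val + 1)
    (by omega) (by omega) (by omega)
  rw [hlen] at h
  exact h

lemma nuSet_bounds (c : InfCycle) (n : ℕ) : ∀ z ∈ nuSet c (n+4), 1 ≤ z ∧ z ≤ n + 3 := by
  obtain ⟨hlen, hnd, hmem⟩ := listOf_spec c n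
  intro z hz
  rw [nuSet, Finset.mem_insert, Finset.mem_singleton] at hz
  rcases hz with rfl | rfl
  · rw [nuPlus_eq]
    refine hmem _ (PedigreeDegreeAux.getD_mem ?_)
    rw [hlen]
    exact Nat.mod_lt _ (by omega)
  · rw [nuMinus_eq]
    refine hmem _ (PedigreeDegreeAux.getD_mem ?_)
    rw [hlen]
    have := (c n).isLt; omega

lemma cycleEdges_step (c : InfCycle) (n : ℕ) : ∀ e ∈ cycleEdges c (n+4),
    e = {nuMinus c (n+4), n+4} ∨ e = {n+4, nuPlus c (n+4)} ∨
    (e ∈ cycleEdges c (n+3) ∧ e ≠ nuSet c (n+4)) := by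
  intro e he
  obtain ⟨hlen, hnd, hmem⟩ := listOf_spec c n
  have hv : (n + 4) ∉ listOf c (n+3) := fun h => by have := (hmem _ h).2; omega
  rw [cycleEdges, List.mem_toFinset] at he
  have hstep : listOf c (n+4) = (listOf c (n+3)).insertIdx ((c n).val + 1) (n+4) := rfl
  rw [hstep] at he
  have h := PedigreeDegreeAux.edge_insertIdx_sub (l := listOf c (n+3)) (q := (c n).val + 1)
    (v := n+4) (by omega) (by omega) (by omega) hnd hv e he
  rw [hlen] at h
  have hx : nuMinus c (n+4) = (listOf c (n+3)).getD ((c n).val + 1 - 1) 0 := nuMinus_eq c n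
  have hy : nuPlus c (n+4) = (listOf c (n+3)).getD (((c n).val + 1) % (n+3)) 0 := nuPlus_eq c n
  have hset : nuSet c (n+4) =
      ({(listOf c (n+3)).getD ((c n).val + 1 - 1) 0,
        (listOf c (n+3)).getD (((c n).val + 1) % (n+3)) 0} : Finset ℕ) := by
    rw [nuSet, hx, hy, Finset.pair_comm]
  rcases h with h | h | ⟨h1, h2⟩
  · left; rw [h, hx]
  · right; left; rw [h, hy]
  · right; right
    refine ⟨by rw [cycleEdges, List.mem_toFinset]; exact h1, ?_⟩
    rw [hset]; exact h2

lemma cycleEdges_three (c : InfCycle) :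
    cycleEdges c 3 = ({({1,2} : Finset ℕ), {2,3}, {3,1}} : Finset (Finset ℕ)) := by
  have h3 : listOf c 3 = [1, 2, 3] := rfl
  rw [cycleEdges, h3]
  decide

lemma cycleEdges_bounds (c : InfCycle) : ∀ n, ∀ e ∈ cycleEdges c n, ∀ z ∈ e, 1 ≤ z ∧ z ≤ n := by
  intro n
  induction n with
  | zero => intro e he; rw [show cycleEdges c 0 = ∅ from rfl] at he; simp at he
  | succ n ih =>
    intro e he z hz
    by_cases h3 : n + 1 ≤ 3
    · have hn2 : n ≤ 2 := by omega
      interval_cases n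
      · rw [show cycleEdges c 1 = ∅ from rfl] at he; simp at he
      · rw [show cycleEdges c 2 = ∅ from rfl] at he; simp at he
      · rw [cycleEdges_three c] at he
        simp only [Finset.mem_insert, Finset.mem_singleton] at he
        rcases he with rfl | rfl | rfl <;>
          simp only [Finset.mem_insert, Finset.mem_singleton] at hz <;> omega
    · obtain ⟨i, hi⟩ : ∃ i, n + 1 = i + 4 := ⟨n - 3, by omega⟩
      rw [hi] at he ⊢
      rcases cycleEdges_step c i e he with h | h | ⟨hold, _⟩
      · rw [h, Finset.mem_insert, Finset.mem_singleton] at hz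
        rcases hz with rfl | rfl
        · have := nuSet_bounds c i (nuMinus c (i+4)) (by simp [nuSet]); omega
        · omega
      · rw [h, Finset.mem_insert, Finset.mem_singleton] at hz
        rcases hz with rfl | rfl
        · omega
        · have := nuSet_bounds c i (nuPlus c (i+4)) (by simp [nuSet]); omega
      · have := ih e (by rw [show i + 3 = n by omega] at hold; exact hold) z hz
        omega

lemma nuSet_notMem_cycleEdges (c : InfCycle) :
    ∀ (j k : ℕ), k + 4 ≤ j → nuSet c (k+4) ∉ cycleEdges c j := by
  intro j
  induction j with
  | zero => intro k hk _; omega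
  | succ j ih =>
    intro k hkj hmem
    obtain ⟨i, hi⟩ : ∃ i, j + 1 = i + 4 := ⟨j - 3, by omega⟩
    rw [hi] at hmem
    rcases cycleEdges_step c i _ hmem with h | h | ⟨hold, hne⟩
    · have hm : (i + 4) ∈ nuSet c (k+4) := by rw [h]; simp
      have := nuSet_bounds c k _ hm
      omega
    · have hm : (i + 4) ∈ nuSet c (k+4) := by rw [h]; simp
      have := nuSet_bounds c k _ hm
      omega
    · rcases eq_or_lt_of_le hkj with heq | hlt
      · exact hne (by rw [show k = i by omega])
      · exact ih k (by omega) (by rw [show i + 3 = j by omega] at hold; exact hold)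

lemma nuSet_inj (c : InfCycle) {k k' : ℕ} (hk : 4 ≤ k) (hk' : 4 ≤ k')
    (h : nuSet c k = nuSet c k') : k = k' := by
  by_contra hne
  rcases lt_or_gt_of_ne hne with hlt | hlt
  · obtain ⟨i, rfl⟩ : ∃ i, k' = i + 4 := ⟨k' - 4, by omega⟩
    obtain ⟨i', rfl⟩ : ∃ i', k = i' + 4 := ⟨k - 4, by omega⟩
    have hmem := nuSet_mem_cycleEdges c i
    rw [← h] at hmem
    exact nuSet_notMem_cycleEdges c (i+3) i' (by omega) hmem
  · obtain ⟨i, rfl⟩ : ∃ i, k = i + 4 := ⟨k - 4, by omega⟩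
    obtain ⟨i', rfl⟩ : ∃ i', k' = i' + 4 := ⟨k' - 4, by omega⟩
    have hmem := nuSet_mem_cycleEdges c i
    rw [h] at hmem
    exact nuSet_notMem_cycleEdges c (i+3) i' (by omega) hmem

lemma edge_max_struct (c : InfCycle) {m : ℕ} (hm : 4 ≤ m) : ∀ j, ∀ e ∈ cycleEdges c j,
    m ∈ e → (∀ z ∈ e, z ≤ m) → e = {m, nuPlus c m} ∨ e = {m, nuMinus c m} := by
  intro j
  induction j with
  | zero => intro e he; rw [show cycleEdges c 0 = ∅ from rfl] at he; simp at he
  | succ j ih =>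
    intro e he hme hbz
    by_cases h3 : j + 1 ≤ 3
    · have := cycleEdges_bounds c (j+1) e he m hme; omega
    · obtain ⟨i, hi⟩ : ∃ i, j + 1 = i + 4 := ⟨j - 3, by omega⟩
      rw [hi] at he
      rcases cycleEdges_step c i e he with h | h | ⟨hold, _⟩
      · have hup : (i + 4) ≤ m := hbz _ (by rw [h]; simp)
        have hcases : m = nuMinus c (i+4) ∨ m = i + 4 := by
          rw [h, Finset.mem_insert, Finset.mem_singleton] at hme; exact hme
        have hmeq : m = i + 4 := by
          rcases hcases with hcm | hcm
          · exfalso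
            have := nuSet_bounds c i _ (show nuMinus c (i+4) ∈ nuSet c (i+4) by simp [nuSet])
            omega
          · exact hcm
        right
        rw [h, hmeq, Finset.pair_comm]
      · have hup : (i + 4) ≤ m := hbz _ (by rw [h]; simp)
        have hcases : m = i + 4 ∨ m = nuPlus c (i+4) := by
          rw [h, Finset.mem_insert, Finset.mem_singleton] at hme; exact hme
        have hmeq : m = i + 4 := by
          rcases hcases with hcm | hcm
          · exact hcm
          · exfalso
            have := nuSet_bounds c i _ (show nuPlus c (i+4) ∈ nuSet c (i+4) by simp [nuSet])
            omega
        left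
        rw [h, hmeq]
      · exact ih e (by rw [show i + 3 = j by omega] at hold; exact hold) hme hbz

lemma max_mem_nuSet (c : InfCycle) (k : ℕ) :
    max (nuPlus c k) (nuMinus c k) ∈ nuSet c k := by
  rcases max_choice (nuPlus c k) (nuMinus c k) with h | h <;> rw [h] <;> simp [nuSet]

lemma mem_nuSet_le_max (c : InfCycle) (k : ℕ) :
    ∀ z ∈ nuSet c k, z ≤ max (nuPlus c k) (nuMinus c k) := by
  intro z hz
  rw [nuSet, Finset.mem_insert, Finset.mem_singleton] at hz
  rcases hz with rfl | rfl
  · exact le_max_left _ _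
  · exact le_max_right _ _

lemma exclusion {cc d : InfCycle} {m ka k0 : ℕ} (hka : 4 ≤ ka) (hk0 : 4 ≤ k0)
    (h1 : nuSet d ka = nuSet cc m) (h2 : k0 = max (nuPlus cc m) (nuMinus cc m))
    (h3 : nuSet d k0 ∩ nuSet cc m = ∅) : False := by
  obtain ⟨i, rfl⟩ : ∃ i, ka = i + 4 := ⟨ka - 4, by omega⟩
  have he : nuSet cc m ∈ cycleEdges d (i+3) := h1 ▸ nuSet_mem_cycleEdges d i
  have hk0m : k0 ∈ nuSet cc m := h2 ▸ max_mem_nuSet cc m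
  have hle : ∀ z ∈ nuSet cc m, z ≤ k0 := by
    intro z hz; rw [h2]; exact mem_nuSet_le_max cc m z hz
  rcases edge_max_struct d hk0 (i+3) _ he hk0m hle with h | h
  · have hmm : nuPlus d k0 ∈ nuSet d k0 ∩ nuSet cc m :=
      Finset.mem_inter.mpr ⟨by simp [nuSet], by rw [h]; simp⟩
    rw [h3] at hmm; exact absurd hmm (Finset.notMem_empty _)
  · have hmm : nuMinus d k0 ∈ nuSet d k0 ∩ nuSet cc m :=
      Finset.mem_inter.mpr ⟨by simp [nuSet], by rw [h]; simp⟩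
    rw [h3] at hmm; exact absurd hmm (Finset.notMem_empty _)

lemma upper_two (cc : InfCycle) {m : ℕ} (hm : 4 ≤ m) (P : ℕ → Prop) :
    {k : ℕ | 4 ≤ k ∧ m = max (nuPlus cc k) (nuMinus cc k) ∧ P k}.Finite ∧
    {k : ℕ | 4 ≤ k ∧ m = max (nuPlus cc k) (nuMinus cc k) ∧ P k}.ncard ≤ 2 := by
  set S := {k : ℕ | 4 ≤ k ∧ m = max (nuPlus cc k) (nuMinus cc k) ∧ P k} with hS
  set T : Set (Finset ℕ) := {({m, nuPlus cc m} : Finset ℕ), {m, nuMinus cc m}} with hT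
  have hmaps : ∀ k ∈ S, nuSet cc k ∈ T := by
    intro k hk
    obtain ⟨hk4, hmax, _⟩ := hk
    obtain ⟨i, rfl⟩ : ∃ i, k = i + 4 := ⟨k - 4, by omega⟩
    have he := nuSet_mem_cycleEdges cc i
    have hmem : m ∈ nuSet cc (i+4) := hmax ▸ max_mem_nuSet cc (i+4)
    have hle : ∀ z ∈ nuSet cc (i+4), z ≤ m := by
      intro z hz; rw [hmax]; exact mem_nuSet_le_max cc (i+4) z hz
    rcases edge_max_struct cc hm (i+3) _ he hmem hle with h | h
    · exact Or.inl h
    · exact Or.inr h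
  have hinjOn : Set.InjOn (nuSet cc) S := fun k hk k' hk' h => nuSet_inj cc hk.1 hk'.1 h
  have hTfin : T.Finite := (Set.finite_singleton _).insert _
  have hSfin : S.Finite :=
    Set.Finite.of_finite_image (hTfin.subset (Set.image_subset_iff.mpr hmaps)) hinjOn
  refine ⟨hSfin, ?_⟩
  calc S.ncard ≤ T.ncard := Set.ncard_le_ncard_of_injOn _ hmaps hinjOn hTfin
    _ ≤ 2 := le_trans (Set.ncard_insert_le _ _) (by simp)

lemma ncard_le_one_sub {S : Set ℕ} (h : S.Subsingleton) : S.ncard ≤ 1 := by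
  rcases S.eq_empty_or_nonempty with rfl | ⟨x, hx⟩
  · simp
  · rw [h.eq_singleton_of_mem hx, Set.ncard_singleton]

end CycleLemmas


/-- The maximum degree of a vertex in a pedigree graph is at most 6. -/
theorem pedigree_graph_degree_le_six (a b : InfCycle) (n m : ℕ) :
    {k : ℕ | (pedigreeGraph a b n).Adj m k}.Finite ∧
    {k : ℕ | (pedigreeGraph a b n).Adj m k}.ncard ≤ 6 := by
  classical
  have hadj : ∀ k, (pedigreeGraph a b n).Adj m k ↔
      (isVertex a b n m ∧ isVertex a b n k ∧
        ((m < k ∧ edgeCond a b m k) ∨ (k < m ∧ edgeCond a b k m))) := fun k => Iff.rfl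
  have hsub : {k | (pedigreeGraph a b n).Adj m k} ⊆ Set.Iic n := by
    intro k hk
    exact ((hadj k).mp hk).2.1.2.1
  have hfin : {k | (pedigreeGraph a b n).Adj m k}.Finite := (Set.finite_Iic n).subset hsub
  refine ⟨hfin, ?_⟩
  by_cases hm : 4 ≤ m
  swap
  · have hempty : {k | (pedigreeGraph a b n).Adj m k} = ∅ := by
      ext k
      simp only [Set.mem_setOf_eq, Set.mem_empty_iff_false, iff_false]
      intro hk
      exact hm ((hadj k).mp hk).1.1
    rw [hempty]
    simp
  · set S1 := {k : ℕ | 4 ≤ k ∧ nuSet b k = nuSet a m} with hS1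
    set S2 := {k : ℕ | 4 ≤ k ∧ nuSet a k = nuSet b m} with hS2
    set S3 := {k : ℕ | 4 ≤ k ∧ k = max (nuPlus a m) (nuMinus a m) ∧
      nuSet b k ∩ nuSet a m = ∅} with hS3
    set S4 := {k : ℕ | 4 ≤ k ∧ k = max (nuPlus b m) (nuMinus b m) ∧
      nuSet a k ∩ nuSet b m = ∅} with hS4
    set S5 := {k : ℕ | 4 ≤ k ∧ m = max (nuPlus a k) (nuMinus a k) ∧
      nuSet b m ∩ nuSet a k = ∅} with hS5
    set S6 := {k : ℕ | 4 ≤ k ∧ m = max (nuPlus b k) (nuMinus b k) ∧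
      nuSet a m ∩ nuSet b k = ∅} with hS6
    have hsubU : {k | (pedigreeGraph a b n).Adj m k} ⊆
        (S1 ∪ S3) ∪ ((S2 ∪ S4) ∪ (S5 ∪ S6)) := by
      intro k hk
      obtain ⟨hvm, hvk, hcase⟩ := (hadj k).mp hk
      have hk4 : 4 ≤ k := hvk.1
      rcases hcase with ⟨hlt, hec⟩ | ⟨hlt, hec⟩
      · rcases hec with h | h | h | h
        · exact Or.inr (Or.inl (Or.inl (show k ∈ S2 from ⟨hk4, h⟩)))
        · exact Or.inl (Or.inl (show k ∈ S1 from ⟨hk4, h⟩))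
        · exact Or.inr (Or.inr (Or.inl (show k ∈ S5 from ⟨hk4, h.1, h.2⟩)))
        · exact Or.inr (Or.inr (Or.inr (show k ∈ S6 from ⟨hk4, h.1, h.2⟩)))
      · rcases hec with h | h | h | h
        · exact Or.inl (Or.inl (show k ∈ S1 from ⟨hk4, h.symm⟩))
        · exact Or.inr (Or.inl (Or.inl (show k ∈ S2 from ⟨hk4, h.symm⟩)))
        · exact Or.inl (Or.inr (show k ∈ S3 from ⟨hk4, h.1, h.2⟩))
        · exact Or.inr (Or.inl (Or.inr (show k ∈ S4 from ⟨hk4, h.1, h.2⟩)))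
    have h13 : (S1 ∪ S3).Subsingleton := by
      intro k hk k' hk'
      rcases hk with hk | hk <;> rcases hk' with hk' | hk'
      · exact nuSet_inj b hk.1 hk'.1 (hk.2.trans hk'.2.symm)
      · exact (exclusion hk.1 hk'.1 hk.2 hk'.2.1 hk'.2.2).elim
      · exact (exclusion hk'.1 hk.1 hk'.2 hk.2.1 hk.2.2).elim
      · rw [hk.2.1, hk'.2.1]
    have h24 : (S2 ∪ S4).Subsingleton := by
      intro k hk k' hk'
      rcases hk with hk | hk <;> rcases hk' with hk' | hk'
      · exact nuSet_inj a hk.1 hk'.1 (hk.2.trans hk'.2.symm)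
      · exact (exclusion hk.1 hk'.1 hk.2 hk'.2.1 hk'.2.2).elim
      · exact (exclusion hk'.1 hk.1 hk'.2 hk.2.1 hk.2.2).elim
      · rw [hk.2.1, hk'.2.1]
    obtain ⟨h5fin, h5card⟩ := upper_two a hm (fun k => nuSet b m ∩ nuSet a k = ∅)
    obtain ⟨h6fin, h6card⟩ := upper_two b hm (fun k => nuSet a m ∩ nuSet b k = ∅)
    have hUfin : ((S1 ∪ S3) ∪ ((S2 ∪ S4) ∪ (S5 ∪ S6))).Finite :=
      (h13.finite.union ((h24.finite).union (h5fin.union h6fin)))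
    calc {k | (pedigreeGraph a b n).Adj m k}.ncard
        ≤ ((S1 ∪ S3) ∪ ((S2 ∪ S4) ∪ (S5 ∪ S6))).ncard := Set.ncard_le_ncard hsubU hUfin
      _ ≤ (S1 ∪ S3).ncard + ((S2 ∪ S4) ∪ (S5 ∪ S6)).ncard := Set.ncard_union_le _ _
      _ ≤ (S1 ∪ S3).ncard + ((S2 ∪ S4).ncard + (S5 ∪ S6).ncard) :=
          add_le_add_right (Set.ncard_union_le _ _) _
      _ ≤ (S1 ∪ S3).ncard + ((S2 ∪ S4).ncard + (S5.ncard + S6.ncard)) :=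
          add_le_add_right (add_le_add_right (Set.ncard_union_le _ _) _) _
      _ ≤ 1 + (1 + (2 + 2)) := by
          have c1 := ncard_le_one_sub h13
          have c2 := ncard_le_one_sub h24
          have c5 : S5.ncard ≤ 2 := by rw [hS5]; exact h5card
          have c6 : S6.ncard ≤ 2 := by rw [hS6]; exact h6card
          omega
      _ ≤ 6 := by omega
end

section
/- Let A and B be infinite cycles, n ≥ 5, and let C be a connected component of the pedigree graph G_{n−1}^{AB}. Then there exists a vertex k ∈ C (namely k = max V(C)) such that for every choice a ∈ {1,…,n−1} of the edge of A_{n−1} into which Alice inserts her node n, there is a choice b ∈ {1,…,n−1} of the edge of B_{n−1} into which Bob inserts his node n for which, in the resulting pedigree graph G_n, the node n is a vertex and is adjacent to k. -/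
open MeasureTheory

namespace PedAux

/-- total cyclic getter -/
def nth (l : List ℕ) (i : ℕ) : ℕ := l.getD (i % l.length) 0

/-- cyclic successor relation -/
def CS (l : List ℕ) (x y : ℕ) : Prop :=
  ∃ i, i < l.length ∧ nth l i = x ∧ nth l (i + 1) = y

lemma nth_eq (l : List ℕ) {i : ℕ} (h : i < l.length) : nth l i = l[i] := by
  unfold nth
  rw [Nat.mod_eq_of_lt h]
  exact List.getD_eq_getElem l 0 h

lemma nth_def' (l : List ℕ) (i : ℕ) (h0 : 0 < l.length) :
    nth l i = l[i % l.length]'(Nat.mod_lt _ h0) := by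
  unfold nth
  exact List.getD_eq_getElem l 0 (Nat.mod_lt _ h0)

lemma nth_mem (l : List ℕ) (i : ℕ) (h0 : 0 < l.length) : nth l i ∈ l := by
  rw [nth_def' l i h0]
  exact List.getElem_mem _

lemma nth_inj (l : List ℕ) (hN : l.Nodup) {i i' : ℕ} (hi : i < l.length) (hi' : i' < l.length)
    (h : nth l i = nth l i') : i = i' := by
  rw [nth_eq l hi, nth_eq l hi'] at h
  exact hN.getElem_inj_iff.1 h

lemma succ_mod_inj {n i i' : ℕ} (hi : i < n) (hi' : i' < n)
    (h : (i + 1) % n = (i' + 1) % n) : i = i' := by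
  rcases Nat.lt_or_ge (i + 1) n with h1 | h1
  · rw [Nat.mod_eq_of_lt h1] at h
    rcases Nat.lt_or_ge (i' + 1) n with h2 | h2
    · rw [Nat.mod_eq_of_lt h2] at h; omega
    · have : i' + 1 = n := by omega
      rw [this, Nat.mod_self] at h; omega
  · have h1' : i + 1 = n := by omega
    rw [h1', Nat.mod_self] at h
    rcases Nat.lt_or_ge (i' + 1) n with h2 | h2
    · rw [Nat.mod_eq_of_lt h2] at h; omega
    · omega

lemma CS.mem_left {l : List ℕ} {x y : ℕ} (h : CS l x y) : x ∈ l := by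
  obtain ⟨i, hi, hx, _⟩ := h
  rw [← hx]; exact nth_mem l i (by omega)

lemma CS.mem_right {l : List ℕ} {x y : ℕ} (h : CS l x y) : y ∈ l := by
  obtain ⟨i, hi, _, hy⟩ := h
  rw [← hy]; exact nth_mem l (i+1) (by omega)

lemma cyclicNext_eq_nth {l : List ℕ} {x : ℕ} (hx : x ∈ l) :
    cyclicNext l x = nth l (l.idxOf x + 1) := by
  have hidx : l.idxOf x < l.length := List.idxOf_lt_length_iff.2 hx
  have h0 : 0 < l.length := by omega
  have hr : l.idxOf x < (l.rotate 1).length := by rwa [List.length_rotate]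
  unfold cyclicNext
  rw [List.getD_eq_getElem _ 0 hr, List.getElem_rotate, nth_def' l _ h0]

lemma cyclicPrev_eq_nth {l : List ℕ} {x : ℕ} (hx : x ∈ l) :
    cyclicPrev l x = nth l (l.idxOf x + (l.length - 1)) := by
  have hidx : l.idxOf x < l.length := List.idxOf_lt_length_iff.2 hx
  have h0 : 0 < l.length := by omega
  have hr : l.idxOf x < (l.rotate (l.length - 1)).length := by rwa [List.length_rotate]
  unfold cyclicPrev
  rw [List.getD_eq_getElem _ 0 hr, List.getElem_rotate, nth_def' l _ h0]

lemma cs_next {l : List ℕ} {x : ℕ} (hx : x ∈ l) : CS l x (cyclicNext l x) := by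
  have hidx : l.idxOf x < l.length := List.idxOf_lt_length_iff.2 hx
  refine ⟨l.idxOf x, hidx, ?_, (cyclicNext_eq_nth hx).symm⟩
  rw [nth_eq l hidx]
  exact List.getElem_idxOf hidx

lemma cs_prev {l : List ℕ} {x : ℕ} (hx : x ∈ l) : CS l (cyclicPrev l x) x := by
  have hidx : l.idxOf x < l.length := List.idxOf_lt_length_iff.2 hx
  have h0 : 0 < l.length := by omega
  refine ⟨(l.idxOf x + (l.length - 1)) % l.length, Nat.mod_lt _ h0, ?_, ?_⟩
  · rw [cyclicPrev_eq_nth hx]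
    rw [nth_def' l _ h0, nth_def' l _ h0]
    congr 1
    exact Nat.mod_mod_of_dvd _ dvd_rfl
  · rw [nth_def' l _ h0]
    have he : ((l.idxOf x + (l.length - 1)) % l.length + 1) % l.length = l.idxOf x := by
      rw [Nat.mod_add_mod]
      have : l.idxOf x + (l.length - 1) + 1 = l.idxOf x + l.length := by omega
      rw [this, Nat.add_mod_right]
      exact Nat.mod_eq_of_lt hidx
    simp only [he]
    exact List.getElem_idxOf hidx

lemma cs_unique_right {l : List ℕ} (hN : l.Nodup) {x y y' : ℕ}
    (h : CS l x y) (h' : CS l x y') : y = y' := by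
  obtain ⟨i, hi, hx, hy⟩ := h
  obtain ⟨i', hi', hx', hy'⟩ := h'
  have : i = i' := nth_inj l hN hi hi' (hx.trans hx'.symm)
  subst this
  exact hy.symm.trans hy'

lemma cs_unique_left {l : List ℕ} (hN : l.Nodup) {x y y' : ℕ}
    (h : CS l y x) (h' : CS l y' x) : y = y' := by
  obtain ⟨i, hi, hy, hx⟩ := h
  obtain ⟨i', hi', hy', hx'⟩ := h'
  have h0 : 0 < l.length := by omega
  rw [nth_def' l _ h0] at hx hx'
  have : (i + 1) % l.length = (i' + 1) % l.length :=
    hN.getElem_inj_iff.1 (hx.trans hx'.symm)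
  have : i = i' := succ_mod_inj hi hi' this
  subst this
  exact hy.symm.trans hy'

lemma cs_irrefl {l : List ℕ} (hN : l.Nodup) (h2 : 2 ≤ l.length) {x : ℕ} : ¬ CS l x x := by
  rintro ⟨i, hi, hx, hy⟩
  have h0 : 0 < l.length := by omega
  have hmod : (i + 1) % l.length < l.length := Nat.mod_lt _ h0
  have heq : nth l i = nth l ((i + 1) % l.length) := by
    rw [hx, ← hy, nth_def' l (i+1) h0, nth_def' l _ h0]
    congr 1
    exact (Nat.mod_mod_of_dvd _ dvd_rfl).symm
  have hii := nth_inj l hN hi hmod heq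
  rcases Nat.lt_or_ge (i + 1) l.length with h1 | h1
  · rw [Nat.mod_eq_of_lt h1] at hii; omega
  · have h3 : i + 1 = l.length := by omega
    rw [h3, Nat.mod_self] at hii
    omega


lemma mem_edgeList_iff {l : List ℕ} {e : Finset ℕ} :
    e ∈ edgeList l ↔ ∃ x y, CS l x y ∧ e = {x, y} := by
  have hlen : (edgeList l).length = l.length := by
    simp [edgeList, List.length_zipWith]
  constructor
  · intro he
    obtain ⟨i, hi, hei⟩ := List.mem_iff_getElem.1 he
    rw [hlen] at hi
    have h0 : 0 < l.length := by omega
    refine ⟨l[i], l[(i + 1) % l.length]'(Nat.mod_lt _ h0), ⟨i, hi, ?_, ?_⟩, ?_⟩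
    · exact nth_eq l hi
    · exact nth_def' l _ h0
    · rw [← hei]
      simp only [edgeList, List.getElem_zipWith, List.getElem_rotate]
  · rintro ⟨x, y, ⟨i, hi, hx, hy⟩, rfl⟩
    have h0 : 0 < l.length := by omega
    rw [List.mem_iff_getElem]
    refine ⟨i, by rwa [hlen], ?_⟩
    simp only [edgeList, List.getElem_zipWith, List.getElem_rotate]
    rw [← hx, ← hy, nth_eq l hi, nth_def' l _ h0]

section Insert

variable {l : List ℕ} {z : ℕ} {j : ℕ}

lemma nth_add_length (l : List ℕ) (i : ℕ) : nth l (i + l.length) = nth l i := by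
  unfold nth; rw [Nat.add_mod_right]

lemma len_ins (hj : j < l.length) : (l.insertIdx (j+1) z).length = l.length + 1 :=
  List.length_insertIdx_of_le_length (by omega) _

lemma nth_ins_low (hj : j < l.length) {i : ℕ} (hi : i ≤ j) :
    nth (l.insertIdx (j+1) z) i = nth l i := by
  rw [nth_eq _ (by rw [len_ins (z:=z) hj]; omega), nth_eq l (by omega),
    List.getElem_insertIdx_of_lt (l := l) (x := z) (i := j+1) (j := i) (by omega) (by rw [len_ins (z:=z) hj]; omega)]

lemma nth_ins_mid (hj : j < l.length) : nth (l.insertIdx (j+1) z) (j+1) = z := by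
  rw [nth_eq _ (by rw [len_ins (z:=z) hj]; omega)]
  exact List.getElem_insertIdx_self (l := l) (x := z) (i := j+1) (by rw [len_ins (z:=z) hj]; omega)

lemma nth_ins_high (hj : j < l.length) {i : ℕ} (hji : j < i) (hi : i < l.length) :
    nth (l.insertIdx (j+1) z) (i+1) = nth l i := by
  obtain ⟨d, rfl⟩ : ∃ d, i = j + 1 + d := ⟨i - j - 1, by omega⟩
  rw [nth_eq _ (by rw [len_ins (z:=z) hj]; omega), nth_eq l hi]
  exact List.getElem_insertIdx_add_succ l z (j+1) d (by omega)

lemma nth_ins_wrap (hj : j < l.length) :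
    nth (l.insertIdx (j+1) z) (l.length + 1) = nth l l.length := by
  have h1 : l.length + 1 = 0 + (l.insertIdx (j+1) z).length := by rw [len_ins (z:=z) hj]; omega
  have h2 : l.length = 0 + l.length := by omega
  rw [h1, nth_add_length, nth_ins_low hj (Nat.zero_le j), h2, nth_add_length]

lemma cs_insert_left (hj : j < l.length) :
    CS (l.insertIdx (j+1) z) (nth l j) z := by
  have hlen := len_ins (z := z) hj
  exact ⟨j, by omega, nth_ins_low hj le_rfl, nth_ins_mid hj⟩

lemma cs_insert_right (hj : j < l.length) :
    CS (l.insertIdx (j+1) z) z (nth l (j+1)) := by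
  have hlen := len_ins (z := z) hj
  refine ⟨j + 1, by omega, nth_ins_mid hj, ?_⟩
  rcases Nat.lt_or_ge (j + 1) l.length with h1 | h1
  · exact nth_ins_high hj (by omega) h1
  · have h2 : j + 1 = l.length := by omega
    rw [show j + 1 + 1 = l.length + 1 by omega, nth_ins_wrap hj, h2]

lemma cs_insert_of_cs (hj : j < l.length) {x y : ℕ} (h : CS l x y)
    (hne : ¬ (x = nth l j ∧ y = nth l (j+1))) :
    CS (l.insertIdx (j+1) z) x y := by
  have hlen := len_ins (z := z) hj
  obtain ⟨i, hi, hx, hy⟩ := h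
  rcases Nat.lt_trichotomy i j with hij | hij | hij
  · exact ⟨i, by omega, by rw [nth_ins_low hj (by omega), hx],
      by rw [nth_ins_low hj (by omega), hy]⟩
  · exact absurd ⟨by rw [← hx, hij], by rw [← hy, hij]⟩ hne
  · refine ⟨i + 1, by omega, by rw [nth_ins_high hj hij hi, hx], ?_⟩
    rcases Nat.lt_or_ge (i + 1) l.length with h1 | h1
    · rw [nth_ins_high hj (by omega) h1, hy]
    · have h2 : i + 1 = l.length := by omega
      rw [show i + 1 + 1 = l.length + 1 by omega, nth_ins_wrap hj, ← h2, hy]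

lemma cs_of_cs_insert (hj : j < l.length) {x y : ℕ}
    (h : CS (l.insertIdx (j+1) z) x y) (hx : x ≠ z) (hy : y ≠ z) :
    CS l x y := by
  have hlen := len_ins (z := z) hj
  obtain ⟨i, hi, hxi, hyi⟩ := h
  rw [hlen] at hi
  rcases Nat.lt_trichotomy i (j+1) with hij | hij | hij
  · rcases Nat.lt_or_ge (i+1) (j+1) with hij2 | hij2
    · exact ⟨i, by omega, by rw [← hxi, nth_ins_low hj (by omega)],
        by rw [← hyi, nth_ins_low hj (by omega)]⟩
    · exfalso
      apply hy
      have h2 : i + 1 = j + 1 := by omega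
      rw [← hyi, h2, nth_ins_mid hj]
  · exfalso
    apply hx
    rw [← hxi, hij, nth_ins_mid hj]
  · obtain ⟨i', rfl⟩ : ∃ i', i = i' + 1 := ⟨i - 1, by omega⟩
    have hji' : j < i' := by omega
    have hi' : i' < l.length := by omega
    refine ⟨i', hi', by rw [← hxi, nth_ins_high hj hji' hi'], ?_⟩
    rcases Nat.lt_or_ge (i' + 1) l.length with h1 | h1
    · rw [← hyi, nth_ins_high hj (by omega) h1]
    · have h2 : i' + 1 = l.length := by omega
      rw [← hyi, show i' + 1 + 1 = l.length + 1 by omega, nth_ins_wrap hj, ← h2]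

end Insert


section ListOf

lemma listOf_succ (c : InfCycle) (i : ℕ) :
    listOf c (i + 4) = (listOf c (i + 3)).insertIdx ((c i).val + 1) (i + 4) := rfl

lemma length_listOf (c : InfCycle) (i : ℕ) : (listOf c (i + 3)).length = i + 3 := by
  induction i with
  | zero => rfl
  | succ m ih =>
      have h : (c m).val + 1 ≤ (listOf c (m + 3)).length := by
        rw [ih]; have := (c m).isLt; omega
      show (listOf c (m + 4)).length = m + 4
      rw [listOf_succ, List.length_insertIdx_of_le_length h _, ih]

lemma mem_listOf (c : InfCycle) (i : ℕ) {x : ℕ} :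
    x ∈ listOf c (i + 3) ↔ 1 ≤ x ∧ x ≤ i + 3 := by
  induction i with
  | zero =>
      show x ∈ [1, 2, 3] ↔ _
      simp only [List.mem_cons, List.not_mem_nil, or_false]
      omega
  | succ m ih =>
      show x ∈ listOf c (m + 4) ↔ _
      rw [listOf_succ,
        List.mem_insertIdx (by rw [length_listOf]; have := (c m).isLt; omega), ih]
      omega

lemma nodup_listOf (c : InfCycle) (i : ℕ) : (listOf c (i + 3)).Nodup := by
  induction i with
  | zero => show ([1, 2, 3] : List ℕ).Nodup; decide
  | succ m ih =>
      show (listOf c (m + 4)).Nodup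
      rw [listOf_succ]
      have hp := List.perm_insertIdx (m + 4) (listOf c (m + 3))
        (show (c m).val + 1 ≤ (listOf c (m + 3)).length by
          rw [length_listOf]; have := (c m).isLt; omega)
      rw [hp.nodup_iff, List.nodup_cons]
      refine ⟨fun hmem => ?_, ih⟩
      rw [mem_listOf] at hmem
      omega

lemma listOf_congr {c c' : InfCycle} : ∀ m, (∀ j, j + 4 ≤ m → c j = c' j) →
    listOf c m = listOf c' m
  | 0, _ => rfl
  | 1, _ => rfl
  | 2, _ => rfl
  | 3, _ => rfl
  | (i + 4), h => by
      rw [listOf_succ, listOf_succ, listOf_congr (i + 3) (fun j hj => h j (by omega)),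
        h i (by omega)]

-- convenient general forms
lemma length_listOf' (c : InfCycle) {m : ℕ} (hm : 3 ≤ m) : (listOf c m).length = m := by
  obtain ⟨i, rfl⟩ : ∃ i, m = i + 3 := ⟨m - 3, by omega⟩
  exact length_listOf c i

lemma mem_listOf' (c : InfCycle) {m : ℕ} (hm : 3 ≤ m) {x : ℕ} :
    x ∈ listOf c m ↔ 1 ≤ x ∧ x ≤ m := by
  obtain ⟨i, rfl⟩ : ∃ i, m = i + 3 := ⟨m - 3, by omega⟩
  exact mem_listOf c i

lemma nodup_listOf' (c : InfCycle) {m : ℕ} (hm : 3 ≤ m) : (listOf c m).Nodup := by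
  obtain ⟨i, rfl⟩ : ∃ i, m = i + 3 := ⟨m - 3, by omega⟩
  exact nodup_listOf c i

lemma listOf_succ' (c : InfCycle) {m : ℕ} (hm : 4 ≤ m) :
    listOf c m = (listOf c (m - 1)).insertIdx ((c (m - 4)).val + 1) m := by
  obtain ⟨i, rfl⟩ : ∃ i, m = i + 4 := ⟨m - 4, by omega⟩
  have h1 : i + 4 - 1 = i + 3 := by omega
  have h2 : i + 4 - 4 = i := by omega
  rw [h1, h2]
  exact listOf_succ c i

end ListOf

section Nu

lemma cval_lt (c : InfCycle) {m : ℕ} (hm : 4 ≤ m) :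
    (c (m - 4)).val < (listOf c (m - 1)).length := by
  rw [length_listOf' c (by omega)]
  have := (c (m - 4)).isLt
  omega

lemma nu_spec (c : InfCycle) {m : ℕ} (hm : 4 ≤ m) :
    nuMinus c m = nth (listOf c (m - 1)) ((c (m - 4)).val) ∧
    nuPlus c m = nth (listOf c (m - 1)) ((c (m - 4)).val + 1) := by
  have hj := cval_lt c hm
  have hN' : (listOf c m).Nodup := nodup_listOf' c (by omega)
  have hmem : m ∈ listOf c m := (mem_listOf' c (by omega)).2 ⟨by omega, le_rfl⟩
  have hins := listOf_succ' c hm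
  have t1 : CS (listOf c m) (nth (listOf c (m - 1)) ((c (m - 4)).val)) m := by
    rw [hins]; exact cs_insert_left hj
  have t2 : CS (listOf c m) m (nth (listOf c (m - 1)) ((c (m - 4)).val + 1)) := by
    rw [hins]; exact cs_insert_right hj
  constructor
  · have h1 : nuMinus c m = cyclicPrev (listOf c m) m := by
      unfold nuMinus
      rw [if_neg (by omega), if_neg (by omega)]
    rw [h1]
    exact cs_unique_left hN' (cs_prev hmem) t1
  · have h1 : nuPlus c m = cyclicNext (listOf c m) m := by
      unfold nuPlus
      rw [if_neg (by omega), if_neg (by omega)]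
    rw [h1]
    exact cs_unique_right hN' (cs_next hmem) t2

lemma cs_nu (c : InfCycle) {m : ℕ} (hm : 4 ≤ m) :
    CS (listOf c (m - 1)) (nuMinus c m) (nuPlus c m) := by
  obtain ⟨h1, h2⟩ := nu_spec c hm
  rw [h1, h2]
  exact ⟨(c (m - 4)).val, cval_lt c hm, rfl, rfl⟩

lemma nu_lt (c : InfCycle) {m : ℕ} (hm : 4 ≤ m) :
    nuMinus c m < m ∧ nuPlus c m < m ∧ 1 ≤ nuMinus c m ∧ 1 ≤ nuPlus c m := by
  have h := cs_nu c hm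
  have h1 := (mem_listOf' c (show 3 ≤ m - 1 by omega)).1 h.mem_left
  have h2 := (mem_listOf' c (show 3 ≤ m - 1 by omega)).1 h.mem_right
  omega

lemma nu_ne (c : InfCycle) {m : ℕ} (hm : 4 ≤ m) : nuMinus c m ≠ nuPlus c m := by
  intro h
  have hN : (listOf c (m - 1)).Nodup := nodup_listOf' c (by omega)
  have h2 : 2 ≤ (listOf c (m - 1)).length := by rw [length_listOf' c (by omega)]; omega
  have := cs_nu c hm
  rw [h] at this
  exact cs_irrefl hN h2 this

lemma nu_mem_cycleEdges (c : InfCycle) {m : ℕ} (hm : 4 ≤ m) :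
    nuSet c m ∈ cycleEdges c (m - 1) := by
  unfold cycleEdges
  rw [List.mem_toFinset, mem_edgeList_iff]
  refine ⟨nuMinus c m, nuPlus c m, cs_nu c hm, ?_⟩
  unfold nuSet
  exact Finset.pair_comm _ _

lemma nu_congr {c c' : InfCycle} {m : ℕ} (h : ∀ j, j + 4 ≤ m → c j = c' j) :
    nuPlus c m = nuPlus c' m ∧ nuMinus c m = nuMinus c' m := by
  unfold nuPlus nuMinus
  rw [listOf_congr m h]
  exact ⟨rfl, rfl⟩

lemma nuSet_congr {c c' : InfCycle} {m : ℕ} (h : ∀ j, j + 4 ≤ m → c j = c' j) :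
    nuSet c m = nuSet c' m := by
  unfold nuSet
  rw [(nu_congr h).1, (nu_congr h).2]

end Nu

lemma pair_cases {x y u v : ℕ} (h : ({x, y} : Finset ℕ) = {u, v}) :
    (x = u ∧ y = v) ∨ (x = v ∧ y = u) := by
  have hx : x ∈ ({u, v} : Finset ℕ) := by rw [← h]; simp
  have hy : y ∈ ({u, v} : Finset ℕ) := by rw [← h]; simp
  have hu : u ∈ ({x, y} : Finset ℕ) := by rw [h]; simp
  have hv : v ∈ ({x, y} : Finset ℕ) := by rw [h]; simp
  simp only [Finset.mem_insert, Finset.mem_singleton] at hx hy hu hv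
  omega


lemma nuPlus_eq (c : InfCycle) {k : ℕ} (hk : 3 ≤ k) :
    nuPlus c k = cyclicNext (listOf c k) k := by
  unfold nuPlus; rw [if_neg (by omega), if_neg (by omega)]

lemma nuMinus_eq (c : InfCycle) {k : ℕ} (hk : 3 ≤ k) :
    nuMinus c k = cyclicPrev (listOf c k) k := by
  unfold nuMinus; rw [if_neg (by omega), if_neg (by omega)]

lemma listOf_step (c : InfCycle) {t : ℕ} (ht : 3 ≤ t) :
    listOf c (t + 1) = (listOf c t).insertIdx ((c (t - 3)).val + 1) (t + 1) := by
  obtain ⟨i, rfl⟩ : ∃ i, t = i + 3 := ⟨t - 3, by omega⟩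
  exact listOf_succ c i

lemma edgek (c : InfCycle) {k : ℕ} (hk : 4 ≤ k) :
    ∀ t, k ≤ t → ∀ y, (CS (listOf c t) k y ∨ CS (listOf c t) y k) →
      y ∈ nuSet c k ∨ k < y := by
  intro t ht
  induction t, ht using Nat.le_induction with
  | base =>
      intro y hy
      have hN : (listOf c k).Nodup := nodup_listOf' c (by omega)
      have hmem : k ∈ listOf c k := (mem_listOf' c (by omega)).2 ⟨by omega, le_rfl⟩
      left
      rcases hy with h | h
      · have hh : cyclicNext (listOf c k) k = y := cs_unique_right hN (cs_next hmem) h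
        have : y = nuPlus c k := by rw [nuPlus_eq c (by omega), hh]
        rw [this]
        simp [nuSet]
      · have hh : cyclicPrev (listOf c k) k = y := cs_unique_left hN (cs_prev hmem) h
        have : y = nuMinus c k := by rw [nuMinus_eq c (by omega), hh]
        rw [this]
        simp [nuSet]
  | succ t ht ih =>
      intro y hy
      rcases eq_or_ne y (t + 1) with rfl | hne
      · right; omega
      · have ht3 : 3 ≤ t := by omega
        have hins := listOf_step c ht3
        have hj : (c (t - 3)).val < (listOf c t).length := by
          rw [length_listOf' c ht3]; have := (c (t - 3)).isLt; omega
        rw [hins] at hy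
        apply ih
        rcases hy with h | h
        · exact Or.inl (cs_of_cs_insert hj h (by omega) hne)
        · exact Or.inr (cs_of_cs_insert hj h hne (by omega))

lemma b_invariant (a b : InfCycle) {k : ℕ} (hk4 : 4 ≤ k) {N : ℕ}
    (HV : ∀ z, k < z → z ≤ N → nuSet a z ≠ nuSet b z →
        k = max (nuPlus b z) (nuMinus b z) → nuSet a k ∩ nuSet b z = ∅ → False) :
    ∀ t, k ≤ t → t ≤ N →
      (cyclicNext (listOf b t) k = nuPlus b k ∨
        (k < cyclicNext (listOf b t) k ∧ nuPlus b k ∈ nuSet a k)) ∧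
      (cyclicPrev (listOf b t) k = nuMinus b k ∨
        (k < cyclicPrev (listOf b t) k ∧ nuMinus b k ∈ nuSet a k)) := by
  intro t ht
  induction t, ht using Nat.le_induction with
  | base =>
      intro _
      exact ⟨Or.inl (nuPlus_eq b (by omega)).symm, Or.inl (nuMinus_eq b (by omega)).symm⟩
  | succ t ht ih =>
      intro htN
      obtain ⟨IHnext, IHprev⟩ := ih (by omega)
      have ht3 : 3 ≤ t := by omega
      set l := listOf b t with hl
      have hlen : l.length = t := length_listOf' b ht3
      have hN : l.Nodup := nodup_listOf' b ht3
      have hkmem : k ∈ l := (mem_listOf' b ht3).2 ⟨by omega, by omega⟩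
      set j := (b (t - 3)).val with hjdef
      have hj : j < l.length := by rw [hlen]; have := (b (t - 3)).isLt; omega
      have hins : listOf b (t + 1) = l.insertIdx (j + 1) (t + 1) := listOf_step b ht3
      have hN' : (listOf b (t + 1)).Nodup := nodup_listOf' b (by omega)
      have hkmem' : k ∈ listOf b (t + 1) := (mem_listOf' b (by omega)).2 ⟨by omega, by omega⟩
      set nxt := cyclicNext l k with hnxt
      set prv := cyclicPrev l k with hprv
      have csn : CS l k nxt := cs_next hkmem
      have csp : CS l prv k := cs_prev hkmem
      have h2len : 2 ≤ l.length := by omega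
      have hnu := nu_spec b (show 4 ≤ t + 1 by omega)
      have hnum : nuMinus b (t + 1) = nth l j := hnu.1
      have hnup : nuPlus b (t + 1) = nth l (j + 1) := hnu.2
      have hpq1 : nuPlus a k < k := (nu_lt a hk4).2.1
      have hpq2 : nuMinus a k < k := (nu_lt a hk4).1
      by_cases hA : nth l j = k
      · -- next neighbor of k is displaced by t+1
        have csKz : CS (listOf b (t + 1)) k (t + 1) := by
          rw [hins]
          have h0 := cs_insert_left (z := t + 1) (l := l) (j := j) hj
          rwa [hA] at h0
        have hnext' : cyclicNext (listOf b (t + 1)) k = t + 1 :=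
          cs_unique_right hN' (cs_next hkmem') csKz
        have hsame : nth l (j + 1) = nxt :=
          cs_unique_right hN (⟨j, hj, hA, rfl⟩ : CS l k (nth l (j + 1))) csn
        have hprvne : prv ≠ k := by
          intro h; rw [h] at csp; exact cs_irrefl hN h2len csp
        have csp' : CS (listOf b (t + 1)) prv k := by
          rw [hins]
          refine cs_insert_of_cs hj csp ?_
          rintro ⟨h1, -⟩
          rw [hA] at h1
          exact hprvne h1
        have hprev' : cyclicPrev (listOf b (t + 1)) k = prv :=
          cs_unique_left hN' (cs_prev hkmem') csp'
        rw [hnext', hprev']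
        refine ⟨Or.inr ⟨by omega, ?_⟩, IHprev⟩
        rcases IHnext with hce | hce
        · by_contra hr
          have hrk : nuPlus b k < k := (nu_lt b hk4).2.1
          have hnupz : nuPlus b (t + 1) = nuPlus b k := by rw [hnup, hsame, hce]
          have hnumz : nuMinus b (t + 1) = k := by rw [hnum, hA]
          by_cases hvz : nuSet a (t + 1) = nuSet b (t + 1)
          · have hset : ({nuPlus a (t + 1), nuMinus a (t + 1)} : Finset ℕ)
                = {nuPlus b k, k} := by
              have : nuSet a (t + 1) = ({nuPlus b k, k} : Finset ℕ) := by
                rw [hvz]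
                unfold nuSet
                rw [hnupz, hnumz]
              exact this
            have csa : CS (listOf a t) (nuMinus a (t + 1)) (nuPlus a (t + 1)) :=
              cs_nu a (m := t + 1) (by omega)
            rcases pair_cases hset with ⟨h1, h2⟩ | ⟨h1, h2⟩
            · rw [h1, h2] at csa
              rcases edgek a hk4 t ht _ (Or.inl csa) with hmem | hlt
              · exact hr hmem
              · omega
            · rw [h1, h2] at csa
              rcases edgek a hk4 t ht _ (Or.inr csa) with hmem | hlt
              · exact hr hmem
              · omega
          · refine HV (t + 1) (by omega) htN hvz ?_ ?_
            · rw [hnupz, hnumz]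
              exact (max_eq_right (le_of_lt hrk)).symm
            · apply Finset.eq_empty_iff_forall_notMem.2
              intro x hx
              rw [Finset.mem_inter] at hx
              obtain ⟨hx1, hx2⟩ := hx
              simp only [nuSet, Finset.mem_insert, Finset.mem_singleton, hnupz, hnumz] at hx1 hx2 hr
              omega
        · exact hce.2
      · by_cases hB : nth l (j + 1) = k
        · -- prev neighbor of k displaced by t+1
          have csZk : CS (listOf b (t + 1)) (t + 1) k := by
            rw [hins]
            have h0 := cs_insert_right (z := t + 1) (l := l) (j := j) hj
            rwa [hB] at h0
          have hprev' : cyclicPrev (listOf b (t + 1)) k = t + 1 :=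
            cs_unique_left hN' (cs_prev hkmem') csZk
          have hsame : nth l j = prv :=
            cs_unique_left hN (⟨j, hj, rfl, hB⟩ : CS l (nth l j) k) csp
          have csn' : CS (listOf b (t + 1)) k nxt := by
            rw [hins]
            refine cs_insert_of_cs hj csn ?_
            rintro ⟨h1, -⟩
            exact hA h1.symm
          have hnext' : cyclicNext (listOf b (t + 1)) k = nxt :=
            cs_unique_right hN' (cs_next hkmem') csn'
          rw [hnext', hprev']
          refine ⟨IHnext, Or.inr ⟨by omega, ?_⟩⟩
          rcases IHprev with hce | hce
          · by_contra hr
            have hrk : nuMinus b k < k := (nu_lt b hk4).1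
            have hnumz : nuMinus b (t + 1) = nuMinus b k := by rw [hnum, hsame, hce]
            have hnupz : nuPlus b (t + 1) = k := by rw [hnup, hB]
            by_cases hvz : nuSet a (t + 1) = nuSet b (t + 1)
            · have hset : ({nuPlus a (t + 1), nuMinus a (t + 1)} : Finset ℕ)
                  = {k, nuMinus b k} := by
                have : nuSet a (t + 1) = ({k, nuMinus b k} : Finset ℕ) := by
                  rw [hvz]
                  unfold nuSet
                  rw [hnupz, hnumz]
                exact this
              have csa : CS (listOf a t) (nuMinus a (t + 1)) (nuPlus a (t + 1)) :=
                cs_nu a (m := t + 1) (by omega)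
              rcases pair_cases hset with ⟨h1, h2⟩ | ⟨h1, h2⟩
              · rw [h1, h2] at csa
                rcases edgek a hk4 t ht _ (Or.inr csa) with hmem | hlt
                · exact hr hmem
                · omega
              · rw [h1, h2] at csa
                rcases edgek a hk4 t ht _ (Or.inl csa) with hmem | hlt
                · exact hr hmem
                · omega
            · refine HV (t + 1) (by omega) htN hvz ?_ ?_
              · rw [hnupz, hnumz]
                exact (max_eq_left (le_of_lt hrk)).symm
              · apply Finset.eq_empty_iff_forall_notMem.2
                intro x hx
                rw [Finset.mem_inter] at hx
                obtain ⟨hx1, hx2⟩ := hx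
                simp only [nuSet, Finset.mem_insert, Finset.mem_singleton, hnupz, hnumz] at hx1 hx2 hr
                omega
          · exact hce.2
        · -- neither neighbor displaced
          have csn' : CS (listOf b (t + 1)) k nxt := by
            rw [hins]
            refine cs_insert_of_cs hj csn ?_
            rintro ⟨h1, -⟩
            exact hA h1.symm
          have csp' : CS (listOf b (t + 1)) prv k := by
            rw [hins]
            refine cs_insert_of_cs hj csp ?_
            rintro ⟨-, h2⟩
            exact hB h2.symm
          rw [cs_unique_right hN' (cs_next hkmem') csn',
            cs_unique_left hN' (cs_prev hkmem') csp']
          exact ⟨IHnext, IHprev⟩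

end PedAux

open PedAux

/-- For every connected component C of `G_{n-1}^{AB}` there is a vertex
k ∈ C such that, whatever edge Alice chooses for her node n, Bob has a choice making n a
vertex of the new pedigree graph adjacent to k. -/
theorem bob_can_extend_component (a b : InfCycle) (n : ℕ) (hn : 5 ≤ n)
    (C : (pGraph a b (n - 1)).ConnectedComponent) :
    ∃ (k : ℕ) (hk : k ∈ vertexSet a b (n - 1)),
      (pGraph a b (n - 1)).connectedComponentMk ⟨k, hk⟩ = C ∧
      ∀ a' : InfCycle, (∀ j, j < n - 4 → a' j = a j) →
        ∃ b' : InfCycle, (∀ j, j < n - 4 → b' j = b j) ∧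
          isVertex a' b' n n ∧ (pedigreeGraph a' b' n).Adj n k := by
  classical
  let P : ℕ → Prop := fun m => ∃ h : m ∈ vertexSet a b (n - 1),
    (pGraph a b (n - 1)).connectedComponentMk ⟨m, h⟩ = C
  obtain ⟨v, hv⟩ := C.exists_rep
  have hPv : P v.val := ⟨v.2, by
    exact hv⟩
  have hvle : v.val ≤ n - 1 := v.2.2.1
  obtain ⟨k, hPk, hkmax⟩ : ∃ k, P k ∧ ∀ z, k < z → z ≤ n - 1 → ¬ P z :=
    ⟨Nat.findGreatest P (n - 1), Nat.findGreatest_spec hvle hPv,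
      fun z h1 h2 => Nat.findGreatest_is_greatest h1 h2⟩
  obtain ⟨hk, hkC⟩ := hPk
  have hkvert : isVertex a b (n - 1) k := hk
  obtain ⟨hk4, hkn, hkv⟩ := hkvert
  refine ⟨k, hk, hkC, ?_⟩
  intro a' ha'
  -- the maximality consequence
  have HV : ∀ z, k < z → z ≤ n - 1 → nuSet a z ≠ nuSet b z →
      k = max (nuPlus b z) (nuMinus b z) → nuSet a k ∩ nuSet b z = ∅ → False := by
    intro z hkz hzn hvz hmax hint
    have hzvert : isVertex a b (n - 1) z := ⟨by omega, hzn, hvz⟩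
    have hadj : (pedigreeGraph a b (n - 1)).Adj k z :=
      ⟨hk, hzvert, Or.inl ⟨hkz, Or.inr (Or.inr (Or.inr ⟨hmax, hint⟩))⟩⟩
    have hadj' : (pGraph a b (n - 1)).Adj ⟨k, hk⟩ ⟨z, hzvert⟩ := hadj
    refine hkmax z hkz hzn ⟨hzvert, ?_⟩
    rw [← hkC]
    exact SimpleGraph.ConnectedComponent.sound hadj'.symm.reachable
  -- the invariant at time n-1
  obtain ⟨INVn, INVp⟩ := PedAux.b_invariant a b hk4 (N := n - 1) HV (n - 1) hkn le_rfl
  set l := listOf b (n - 1) with hldef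
  have hlen : l.length = n - 1 := length_listOf' b (by omega)
  have hpa : nuPlus a k < k := (nu_lt a hk4).2.1
  have hma : nuMinus a k < k := (nu_lt a hk4).1
  -- find a good neighbor u of k in B_{n-1}
  obtain ⟨u, hult, hunm, csu⟩ : ∃ u, u < k ∧ u ∉ nuSet a k ∧ (CS l k u ∨ CS l u k) := by
    have hkmem : k ∈ l := (mem_listOf' b (by omega)).2 ⟨by omega, by omega⟩
    by_cases hg1 : nuPlus b k ∉ nuSet a k ∧ cyclicNext l k = nuPlus b k
    · refine ⟨nuPlus b k, (nu_lt b hk4).2.1, hg1.1, Or.inl ?_⟩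
      rw [← hg1.2]
      exact cs_next hkmem
    · by_cases hg2 : nuMinus b k ∉ nuSet a k ∧ cyclicPrev l k = nuMinus b k
      · refine ⟨nuMinus b k, (nu_lt b hk4).1, hg2.1, Or.inr ?_⟩
        rw [← hg2.2]
        exact cs_prev hkmem
      · exfalso
        have hin1 : nuPlus b k ∈ nuSet a k := by
          rcases INVn with h | h
          · by_contra hh; exact hg1 ⟨hh, h⟩
          · exact h.2
        have hin2 : nuMinus b k ∈ nuSet a k := by
          rcases INVp with h | h
          · by_contra hh; exact hg2 ⟨hh, h⟩
          · exact h.2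
        have hsub : nuSet b k ⊆ nuSet a k := by
          intro x hx
          simp only [nuSet, Finset.mem_insert, Finset.mem_singleton] at hx
          rcases hx with rfl | rfl
          · exact hin1
          · exact hin2
        have hcard : (nuSet a k).card ≤ (nuSet b k).card := by
          have h1 : (nuSet b k).card = 2 := Finset.card_pair (nu_ne b hk4).symm
          have h2 : (nuSet a k).card ≤ 2 := by
            unfold nuSet
            exact (Finset.card_insert_le _ _).trans (by simp)
          omega
        exact hkv (Finset.eq_of_subset_of_card_le hsub hcard).symm
  obtain ⟨i, hi, hcase⟩ : ∃ i, i < l.length ∧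
      ((nth l i = k ∧ nth l (i + 1) = u) ∨ (nth l i = u ∧ nth l (i + 1) = k)) := by
    rcases csu with ⟨i, hi, h1, h2⟩ | ⟨i, hi, h1, h2⟩
    · exact ⟨i, hi, Or.inl ⟨h1, h2⟩⟩
    · exact ⟨i, hi, Or.inr ⟨h1, h2⟩⟩
  -- Bob's reply
  set b' : InfCycle := Function.update b (n - 4) (⟨i, by omega⟩ : Fin (n - 4 + 3)) with hb'def
  have hb'pre : ∀ j, j < n - 4 → b' j = b j := by
    intro j hj
    exact Function.update_of_ne (by omega) _ b
  have hlb' : listOf b' (n - 1) = l := listOf_congr (n - 1) (fun j hj => hb'pre j (by omega))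
  have hval : (b' (n - 4)).val = i := by
    rw [hb'def]
    rw [Function.update_self]
  have hbm : nuMinus b' n = nth l i := by
    have h := (nu_spec b' (show 4 ≤ n by omega)).1
    rw [h, show n - 1 = n - 1 from rfl, hlb', hval]
  have hbp : nuPlus b' n = nth l (i + 1) := by
    have h := (nu_spec b' (show 4 ≤ n by omega)).2
    rw [h, hlb', hval]
  have hset_b' : nuSet b' n = ({k, u} : Finset ℕ) := by
    unfold nuSet
    rw [hbp, hbm]
    rcases hcase with ⟨h1, h2⟩ | ⟨h1, h2⟩
    · rw [h1, h2]; exact Finset.pair_comm u k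
    · rw [h1, h2]
  -- Alice-side facts
  have hla' : listOf a' (n - 1) = listOf a (n - 1) :=
    listOf_congr (n - 1) (fun j hj => ha' j (by omega))
  have hnuk_a : nuSet a' k = nuSet a k := nuSet_congr (fun j hj => ha' j (by omega))
  have hnuk_b : nuSet b' k = nuSet b k := nuSet_congr (fun j hj => hb'pre j (by omega))
  have hAmem : nuSet a' n ∈ cycleEdges a (n - 1) := by
    have h := nu_mem_cycleEdges a' (show 4 ≤ n by omega)
    unfold cycleEdges at h ⊢
    rwa [hla'] at h
  have hKU_not : ({k, u} : Finset ℕ) ∉ cycleEdges a (n - 1) := by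
    intro hmem
    unfold cycleEdges at hmem
    rw [List.mem_toFinset, mem_edgeList_iff] at hmem
    obtain ⟨x, y, hcs, hexy⟩ := hmem
    rcases pair_cases hexy with ⟨h1, h2⟩ | ⟨h1, h2⟩
    · rw [← h1, ← h2] at hcs
      rcases edgek a hk4 (n - 1) hkn u (Or.inl hcs) with hm | hm
      · exact hunm hm
      · omega
    · rw [← h1, ← h2] at hcs
      rcases edgek a hk4 (n - 1) hkn u (Or.inr hcs) with hm | hm
      · exact hunm hm
      · omega
  have hnn : isVertex a' b' n n := by
    refine ⟨by omega, le_rfl, ?_⟩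
    rw [hset_b']
    intro h
    rw [h] at hAmem
    exact hKU_not hAmem
  have hkn' : isVertex a' b' n k := by
    refine ⟨hk4, by omega, ?_⟩
    rw [hnuk_a, hnuk_b]
    exact hkv
  have hmaxcond : k = max (nuPlus b' n) (nuMinus b' n) := by
    rw [hbp, hbm]
    rcases hcase with ⟨h1, h2⟩ | ⟨h1, h2⟩
    · rw [h1, h2]; exact (max_eq_right (le_of_lt hult)).symm
    · rw [h1, h2]; exact (max_eq_left (le_of_lt hult)).symm
  have hempty : nuSet a' k ∩ nuSet b' n = ∅ := by
    rw [hnuk_a, hset_b']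
    apply Finset.eq_empty_iff_forall_notMem.2
    intro x hx
    rw [Finset.mem_inter] at hx
    obtain ⟨hx1, hx2⟩ := hx
    simp only [nuSet, Finset.mem_insert, Finset.mem_singleton] at hx1 hx2 hunm
    omega
  refine ⟨b', hb'pre, hnn, ?_⟩
  exact ⟨hnn, hkn', Or.inr ⟨by omega, Or.inr (Or.inr (Or.inr ⟨hmaxcond, hempty⟩))⟩⟩
end
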